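/- arXiv:0810.5567 — 5 statements merged into one kernel-verified Lean document; each statement's English description precedes it below -/
import Mathlib

section
/- For all integers 1 ≤ N₁ ≤ N₂ and all finite counting measures μ of total mass N₁ and ν of total mass N₂ on ℤ with μ ≺ ν, the one-step transition distribution p_{N₁}(μ,·) of the N₁-particle branching-selection system is stochastically dominated by the one-step transition distribution p_{N₂}(ν,·) of the N₂-particle system: p_{N₁}(μ,·) ≺≺ p_{N₂}(ν,·). -/
open MeasureTheory ProbabilityTheory Filter

noncomputable section

/-- The random walk step distribution `p·δ₁ + (1−p)·δ₀` on `ℤ`. -/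
def bernoulliStep (p : ℝ) : Measure ℤ :=
  ENNReal.ofReal p • Measure.dirac 1 + ENNReal.ofReal (1 - p) • Measure.dirac 0

/-- One branching-selection step: each of the `N` particles at positions `x i` branches into
two particles, displaced by `y i 0` and `y i 1` respectively; of the `2N` resulting particles
only the `N` rightmost are kept, listed in decreasing order. -/
def nextPop (N : ℕ) (x : Fin N → ℤ) (y : Fin N → Fin 2 → ℤ) : Fin N → ℤ :=
  fun i =>
    (((Finset.univ.val.map fun q : Fin N × Fin 2 => x q.1 + y q.1 q.2).sort (· ≥ ·)).getD i 0)

variable {Ω : Type*}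

/-- The branching-selection particle system with `N` particles driven by the noise family `Y`
(`Y n i ℓ` is the displacement of the `ℓ`-th offspring of the `i`-th particle at time `n`),
started from `N` particles at the origin. -/
def chain (N : ℕ) (Y : ℕ → ℕ → Fin 2 → Ω → ℤ) : ℕ → Ω → Fin N → ℤ
  | 0 => fun _ _ => 0
  | n + 1 => fun ω => nextPop N (chain N Y n ω) fun i ℓ => Y n i.val ℓ ω

/-- Maximal position in a population. -/
def maxPop {N : ℕ} (x : Fin N → ℤ) : ℤ :=
  ((Finset.univ.val.map x).sort (· ≤ ·)).getLastD 0

/-- Minimal position in a population. -/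
def minPop {N : ℕ} (x : Fin N → ℤ) : ℤ :=
  ((Finset.univ.val.map x).sort (· ≤ ·)).headD 0

/-- The stochastic order `≺` between populations (finite counting measures on `ℤ`):
`x ≺ y` iff for every `t ∈ ℤ` the number of particles of `x` in `[t,∞)` is at most the
number of particles of `y` in `[t,∞)`. -/
def popLE {N₁ N₂ : ℕ} (x : Fin N₁ → ℤ) (y : Fin N₂ → ℤ) : Prop :=
  ∀ t : ℤ,
    (Finset.univ.filter fun i => t ≤ x i).card ≤ (Finset.univ.filter fun j => t ≤ y j).card

/-- The transition kernel `p_N` of the `N`-particle branching-selection system: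
branch each particle into two, displacing the offspring by i.i.d. Bernoulli(`p`) steps,
then keep the `N` rightmost of the `2N` resulting particles. -/
def stepMeasure (p : ℝ) (N : ℕ) (x : Fin N → ℤ) : Measure (Fin N → ℤ) :=
  Measure.map (fun y : Fin N × Fin 2 → ℤ => nextPop N x fun i ℓ => y (i, ℓ))
    (Measure.pi fun _ : Fin N × Fin 2 => bernoulliStep p)

/-- The stochastic order `≺≺` between distributions of populations: there is a coupling
`(X, Y)` with the two prescribed marginals such that `X ≺ Y` almost surely. -/
def stochDom {N₁ N₂ : ℕ} (Q : Measure (Fin N₁ → ℤ)) (R : Measure (Fin N₂ → ℤ)) : Prop :=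
  ∃ (Ω' : Type) (_ : MeasureSpace Ω') (X : Ω' → Fin N₁ → ℤ) (Z : Ω' → Fin N₂ → ℤ),
    IsProbabilityMeasure (ℙ : Measure Ω') ∧
    Measure.map X ℙ = Q ∧ Measure.map Z ℙ = R ∧ ∀ᵐ ω ∂(ℙ : Measure Ω'), popLE (X ω) (Z ω)

/-! ### Auxiliary lemmas -/

lemma get_anti_aux {L : List ℤ} (hL : L.Pairwise (· ≥ ·)) {j i : ℕ} (hji : j ≤ i)
    (hi : i < L.length) :
    L[i] ≤ L[j]'(lt_of_le_of_lt hji hi) :=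
  hL.rel_get_of_le (a := ⟨j, lt_of_le_of_lt hji hi⟩) (b := ⟨i, hi⟩) hji

lemma countP_split_aux (p : ℤ → Bool) (L : List ℤ) (n : ℕ) :
    L.countP p = (L.take n).countP p + (L.drop n).countP p := by
  rw [← List.countP_append, List.take_append_drop]

lemma lt_countP_get_aux {L : List ℤ} (hL : L.Pairwise (· ≥ ·)) {i : ℕ} (hi : i < L.length)
    {t : ℤ} (ht : t ≤ L[i]) :
    i < L.countP (fun x => decide (t ≤ x)) := by
  rw [countP_split_aux _ L (i+1)]
  have h2 : (L.take (i+1)).countP (fun x => decide (t ≤ x)) = (L.take (i+1)).length := by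
    rw [List.countP_eq_length]
    intro a ha
    obtain ⟨j, hj, rfl⟩ := List.mem_iff_getElem.1 ha
    have hj' : j ≤ i := by
      have := hj; rw [List.length_take] at this; omega
    rw [List.getElem_take]
    simpa using le_trans ht (get_anti_aux hL hj' hi)
  have h3 : (L.take (i+1)).length = i + 1 := by
    rw [List.length_take]; omega
  omega

lemma le_get_of_lt_countP_aux {L : List ℤ} (hL : L.Pairwise (· ≥ ·)) {i : ℕ}
    (hi : i < L.length) {t : ℤ} (h : i < L.countP (fun x => decide (t ≤ x))) : t ≤ L[i] := by
  by_contra hlt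
  push_neg at hlt
  rw [countP_split_aux _ L i] at h
  have h2 : (L.drop i).countP (fun x => decide (t ≤ x)) = 0 := by
    rw [List.countP_eq_zero]
    intro a ha
    obtain ⟨j, hj, rfl⟩ := List.mem_iff_getElem.1 ha
    have hj' : i + j < L.length := by
      have := hj; rw [List.length_drop] at this; omega
    rw [List.getElem_drop]
    simp only [decide_eq_true_eq, not_le]
    exact lt_of_le_of_lt (get_anti_aux hL (Nat.le_add_right i j) hj') hlt
  have h3 : (L.take i).countP (fun x => decide (t ≤ x)) ≤ i := by
    exact le_trans List.countP_le_length (by simp)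
  omega

lemma countP_sort_eq_aux {ι : Type*} [Fintype ι] (a : ι → ℤ) (t : ℤ) :
    ((Finset.univ.val.map a).sort (· ≥ ·)).countP (fun x => decide (t ≤ x))
      = (Finset.univ.filter fun q => t ≤ a q).card := by
  have : ((Finset.univ.val.map a).sort (· ≥ ·)).countP (fun x => decide (t ≤ x))
      = Multiset.countP (fun x => t ≤ x) (Finset.univ.val.map a) := by
    rw [← Multiset.sort_eq (s := Finset.univ.val.map a) (r := (· ≥ ·)), Multiset.coe_countP]
    simp
  rw [this, Multiset.countP_map]
  rfl

lemma length_sort_card_aux {ι : Type*} [Fintype ι] (a : ι → ℤ) :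
    ((Finset.univ.val.map a).sort (· ≥ ·)).length = Fintype.card ι := by
  rw [Multiset.length_sort, Multiset.card_map]
  exact Finset.card_univ

lemma sortedD_le_aux {ι₁ ι₂ : Type*} [Fintype ι₁] [Fintype ι₂] (a : ι₁ → ℤ) (b : ι₂ → ℤ)
    (g : ι₁ → ι₂) (hg : Function.Injective g) (hab : ∀ q, a q ≤ b (g q))
    {i : ℕ} (hi : i < Fintype.card ι₁) :
    ((Finset.univ.val.map a).sort (· ≥ ·)).getD i 0
      ≤ ((Finset.univ.val.map b).sort (· ≥ ·)).getD i 0 := by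
  set L₁ := (Finset.univ.val.map a).sort (· ≥ ·) with hL₁def
  set L₂ := (Finset.univ.val.map b).sort (· ≥ ·) with hL₂def
  have hi₁ : i < L₁.length := by rw [hL₁def, length_sort_card_aux]; exact hi
  have hi₂ : i < L₂.length := by
    rw [hL₂def, length_sort_card_aux]
    exact lt_of_lt_of_le hi (Fintype.card_le_of_injective g hg)
  rw [List.getD_eq_getElem?_getD, List.getD_eq_getElem?_getD,
    List.getElem?_eq_getElem hi₁, List.getElem?_eq_getElem hi₂, Option.getD_some, Option.getD_some]
  set t := L₁[i] with htdef
  have hcount : i < L₂.countP (fun x => decide (t ≤ x)) := by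
    have c1 : i < L₁.countP (fun x => decide (t ≤ x)) :=
      lt_countP_get_aux (Multiset.pairwise_sort (s := _) (r := _)) hi₁ le_rfl
    rw [hL₁def, countP_sort_eq_aux] at c1
    rw [hL₂def, countP_sort_eq_aux]
    classical
    refine lt_of_lt_of_le c1 (Finset.card_le_card_of_injOn g ?_ hg.injOn)
    intro q hq
    simp only [Finset.mem_coe, Finset.mem_filter, Finset.mem_univ, true_and] at hq ⊢
    exact le_trans hq (hab q)
  exact le_get_of_lt_countP_aux (Multiset.pairwise_sort (s := _) (r := _)) hi₂ hcount

lemma pi_map_precomp_aux {ι κ : Type*} [Fintype ι] [Fintype κ]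
    (m : Measure ℤ) [IsProbabilityMeasure m] (g : ι → κ) (hg : Function.Injective g) :
    Measure.map (fun ω : κ → ℤ => fun i => ω (g i)) (Measure.pi fun _ : κ => m)
      = Measure.pi fun _ : ι => m := by
  classical
  refine (Measure.pi_eq fun s hs => ?_).symm
  have hmeas : Measurable (fun ω : κ → ℤ => fun i => ω (g i)) :=
    measurable_pi_lambda _ fun i => measurable_pi_apply (g i)
  rw [Measure.map_apply hmeas (MeasurableSet.univ_pi hs)]
  have hset : (fun ω : κ → ℤ => fun i => ω (g i)) ⁻¹' Set.univ.pi s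
      = Set.univ.pi (Function.extend g s fun _ => Set.univ) := by
    ext ω
    simp only [Set.mem_preimage, Set.mem_pi, Set.mem_univ, forall_true_left]
    constructor
    · intro h k
      rcases em (∃ i, g i = k) with ⟨i, rfl⟩ | hk
      · rw [hg.extend_apply]; exact h i
      · rw [Function.extend_apply' _ _ _ hk]; trivial
    · intro h i
      have := h (g i)
      rwa [hg.extend_apply] at this
  rw [hset, Measure.pi_pi]
  have h1 : ∀ k ∈ Finset.univ, k ∉ Finset.univ.image g →
      m (Function.extend g s (fun _ => Set.univ) k) = 1 := by
    intro k _ hk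
    have : ¬ ∃ i, g i = k := by
      rintro ⟨i, rfl⟩; exact hk (Finset.mem_image_of_mem g (Finset.mem_univ i))
    rw [Function.extend_apply' _ _ _ this]
    exact measure_univ
  rw [← Finset.prod_subset (Finset.subset_univ (Finset.univ.image g)) h1,
    Finset.prod_image (fun a _ b _ h => hg h)]
  exact Finset.prod_congr rfl fun i _ => by rw [hg.extend_apply]

lemma bernoulliStep_isProbability {p : ℝ} (hp0 : 0 < p) (hp1 : p < 1) :
    IsProbabilityMeasure (bernoulliStep p) := by
  constructor
  simp only [bernoulliStep, Measure.add_apply, Measure.smul_apply, smul_eq_mul,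
    Measure.dirac_apply_of_mem (Set.mem_univ _), mul_one]
  rw [← ENNReal.ofReal_add hp0.le (by linarith)]
  norm_num

/-- **Proposition (monotonicity of the kernels):** for `1 ≤ N₁ ≤ N₂` and populations
`μ ≺ ν` of respective sizes `N₁` and `N₂`, the one-step distribution `p_{N₁}(μ,·)` is
stochastically dominated by `p_{N₂}(ν,·)`. -/
theorem kernel_monotone
    (p : ℝ) (hp0 : 0 < p) (hp1 : p < 1)
    (N₁ N₂ : ℕ) (hN₁ : 1 ≤ N₁) (hN₂ : N₁ ≤ N₂)
    (μ : Fin N₁ → ℤ) (ν : Fin N₂ → ℤ) (hμν : popLE μ ν) :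
    stochDom (stepMeasure p N₁ μ) (stepMeasure p N₂ ν) := by
  classical
  -- Hall's marriage theorem: a matching f with μ i ≤ ν (f i)
  have hall : ∀ s : Finset (Fin N₁),
      s.card ≤ (s.biUnion fun i => Finset.univ.filter fun j : Fin N₂ => μ i ≤ ν j).card := by
    intro s
    rcases s.eq_empty_or_nonempty with rfl | hs
    · simp
    have hsne : (s.image μ).Nonempty := hs.image μ
    set c := (s.image μ).min' hsne with hcdef
    obtain ⟨i₀, hi₀, hμi₀⟩ : ∃ i ∈ s, μ i = c := by
      have := (s.image μ).min'_mem hsne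
      rw [Finset.mem_image] at this
      exact this
    calc s.card ≤ (Finset.univ.filter fun i : Fin N₁ => c ≤ μ i).card := by
          refine Finset.card_le_card fun i hi => ?_
          simp only [Finset.mem_filter, Finset.mem_univ, true_and]
          exact Finset.min'_le _ _ (Finset.mem_image_of_mem μ hi)
      _ ≤ (Finset.univ.filter fun j : Fin N₂ => c ≤ ν j).card := hμν c
      _ ≤ (s.biUnion fun i => Finset.univ.filter fun j : Fin N₂ => μ i ≤ ν j).card := by
          refine Finset.card_le_card fun j hj => ?_
          simp only [Finset.mem_filter, Finset.mem_univ, true_and] at hj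
          exact Finset.mem_biUnion.2 ⟨i₀, hi₀, by
            simp only [Finset.mem_filter, Finset.mem_univ, true_and]
            exact hμi₀ ▸ hj⟩
  obtain ⟨f, hfinj, hf'⟩ :=
    (Finset.all_card_le_biUnion_card_iff_exists_injective
      (fun i : Fin N₁ => Finset.univ.filter fun j : Fin N₂ => μ i ≤ ν j)).1 hall
  have hfle : ∀ i, μ i ≤ ν (f i) := fun i => by
    have := hf' i
    simpa using this
  haveI : IsProbabilityMeasure (bernoulliStep p) := bernoulliStep_isProbability hp0 hp1
  -- the coupling
  refine ⟨(Fin N₂ × Fin 2) → ℤ, ⟨Measure.pi fun _ => bernoulliStep p⟩,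
    (fun ω => nextPop N₁ μ fun i ℓ => ω (f i, ℓ)),
    (fun ω => nextPop N₂ ν fun j ℓ => ω (j, ℓ)), ?_, ?_, ?_, ?_⟩
  · exact inferInstanceAs (IsProbabilityMeasure (Measure.pi fun _ : Fin N₂ × Fin 2 =>
      bernoulliStep p))
  · -- first marginal
    have hginj : Function.Injective
        (fun q : Fin N₁ × Fin 2 => ((f q.1, q.2) : Fin N₂ × Fin 2)) := by
      rintro ⟨i, ℓ⟩ ⟨i', ℓ'⟩ h
      simp only [Prod.mk.injEq] at h
      exact Prod.ext (hfinj h.1) h.2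
    have hπ : Measurable (fun ω : (Fin N₂ × Fin 2) → ℤ =>
        fun q : Fin N₁ × Fin 2 => ω (f q.1, q.2)) :=
      measurable_pi_lambda _ fun q => measurable_pi_apply _
    have hF : Measurable (fun y : Fin N₁ × Fin 2 → ℤ => nextPop N₁ μ fun i ℓ => y (i, ℓ)) :=
      measurable_of_countable _
    show Measure.map ((fun y : Fin N₁ × Fin 2 → ℤ => nextPop N₁ μ fun i ℓ => y (i, ℓ)) ∘
        (fun ω : (Fin N₂ × Fin 2) → ℤ => fun q : Fin N₁ × Fin 2 => ω (f q.1, q.2)))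
        (Measure.pi fun _ : Fin N₂ × Fin 2 => bernoulliStep p) = stepMeasure p N₁ μ
    rw [← Measure.map_map hF hπ,
      pi_map_precomp_aux (bernoulliStep p)
        (fun q : Fin N₁ × Fin 2 => ((f q.1, q.2) : Fin N₂ × Fin 2)) hginj]
    rfl
  · rfl
  · -- a.s. domination (in fact surely)
    refine Filter.Eventually.of_forall fun ω => ?_
    have hginj : Function.Injective
        (fun q : Fin N₁ × Fin 2 => ((f q.1, q.2) : Fin N₂ × Fin 2)) := by
      rintro ⟨a, ℓ⟩ ⟨a', ℓ'⟩ h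
      simp only [Prod.mk.injEq] at h
      exact Prod.ext (hfinj h.1) h.2
    intro t
    refine Finset.card_le_card_of_injOn (Fin.castLE hN₂) ?_ ((Fin.castLE_injective hN₂).injOn)
    intro i hi
    simp only [Finset.mem_coe, Finset.mem_filter, Finset.mem_univ, true_and] at hi ⊢
    refine le_trans hi ?_
    have hic : (i : ℕ) < Fintype.card (Fin N₁ × Fin 2) := by
      have := i.isLt
      simp only [Fintype.card_prod, Fintype.card_fin]
      omega
    have key := sortedD_le_aux (fun q : Fin N₁ × Fin 2 => μ q.1 + ω (f q.1, q.2))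
      (fun q : Fin N₂ × Fin 2 => ν q.1 + ω (q.1, q.2))
      (fun q : Fin N₁ × Fin 2 => ((f q.1, q.2) : Fin N₂ × Fin 2)) hginj
      (fun q => add_le_add_left (hfle q.1) _) hic
    exact key

end
end

section
/- For every N ≥ 1 and every n ≥ 0, with probability one the diameter of the population satisfies d(X^N_n) = max X^N_n − min X^N_n ≤ ⌈log(N)/log(2)⌉ + 1. -/
open MeasureTheory ProbabilityTheory Filter

noncomputable section

variable {Ω : Type*}

/-! ### Auxiliary lemmas -/

/-- In a `(· ≥ ·)`-sorted list, later entries are smaller. -/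
lemma sorted_ge_le {L : List ℤ} (hL : L.Pairwise (· ≥ ·)) {i j : ℕ} (hij : i ≤ j)
    (hj : j < L.length) : L[j] ≤ L[i] := by
  rcases eq_or_lt_of_le hij with h | h
  · subst h; exact le_refl _
  · exact hL.rel_get_of_lt (a := ⟨i, lt_trans h hj⟩) (b := ⟨j, hj⟩) h

/-- If at least `i+1` entries of a `(· ≥ ·)`-sorted list are `≥ t`, then the `i`-th entry is. -/
lemma sorted_ge_get_of_countP {L : List ℤ} (hL : L.Pairwise (· ≥ ·)) {i : ℕ} (hi : i < L.length)
    {t : ℤ} (h : i < L.countP (fun a => t ≤ a)) : t ≤ L[i] := by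
  by_contra h'
  push_neg at h'
  have hdrop : (L.drop i).countP (fun a => t ≤ a) = 0 := by
    rw [List.countP_eq_zero]
    intro a ha
    simp only [decide_eq_true_eq]
    obtain ⟨j, hj, hja⟩ := List.mem_iff_getElem.1 ha
    have hij : i + j < L.length := by
      have : (L.drop i).length = L.length - i := List.length_drop
      omega
    have h1 : a = L[i + j]'hij := by rw [← hja]; exact List.getElem_drop ..
    have h2 : L[i + j]'hij ≤ L[i]'hi := sorted_ge_le hL (Nat.le_add_right _ _) hij
    push_neg
    omega
  have hsplit := L.take_append_drop i
  have hcnt : L.countP (fun a => t ≤ a) =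
      (L.take i).countP (fun a => t ≤ a) + (L.drop i).countP (fun a => t ≤ a) := by
    conv_lhs => rw [← hsplit]
    exact List.countP_append
  have h1 : (L.take i).countP (fun a => t ≤ a) ≤ i := by
    calc (L.take i).countP (fun a => t ≤ a) ≤ (L.take i).length := List.countP_le_length
    _ ≤ i := by simp [List.length_take]
  omega

lemma list_getLastD_mem {L : List ℤ} (h : L ≠ []) : L.getLastD 0 ∈ L := by
  rw [List.getLastD_eq_getLast?, List.getLast?_eq_getLast h]
  simp [List.getLast_mem]

lemma list_headD_mem {L : List ℤ} (h : L ≠ []) : L.headD 0 ∈ L := by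
  cases L with
  | nil => exact absurd rfl h
  | cons a l => exact List.mem_cons_self

/-- `maxPop x` is one of the particle positions. -/
lemma maxPop_mem {N : ℕ} (hN : 1 ≤ N) (x : Fin N → ℤ) : ∃ j : Fin N, maxPop x = x j := by
  have hne : ((Finset.univ.val.map x).sort (· ≤ ·)) ≠ [] := by
    intro h
    have := congrArg List.length h
    rw [Multiset.length_sort, Multiset.card_map] at this
    simp [Finset.card_univ] at this
    omega
  have hmem : maxPop x ∈ Finset.univ.val.map x :=
    (Multiset.mem_sort _).1 (list_getLastD_mem hne)
  obtain ⟨j, _, hj⟩ := Multiset.mem_map.1 hmem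
  exact ⟨j, hj.symm⟩

/-- `minPop x` is one of the particle positions. -/
lemma minPop_mem {N : ℕ} (hN : 1 ≤ N) (x : Fin N → ℤ) : ∃ j : Fin N, minPop x = x j := by
  have hne : ((Finset.univ.val.map x).sort (· ≤ ·)) ≠ [] := by
    intro h
    have := congrArg List.length h
    rw [Multiset.length_sort, Multiset.card_map] at this
    simp [Finset.card_univ] at this
    omega
  have hmem : minPop x ∈ Finset.univ.val.map x :=
    (Multiset.mem_sort _).1 (list_headD_mem hne)
  obtain ⟨j, _, hj⟩ := Multiset.mem_map.1 hmem
  exact ⟨j, hj.symm⟩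

section det

variable {N : ℕ} (hN : 1 ≤ N)

/-- The key deterministic step lemma: the selected population is decreasing, and within `k`
of its maximum there are at least `min (2^k) N` particles. -/
lemma step_inv (x : Fin N → ℤ) (y : Fin N → Fin 2 → ℤ)
    (hy : ∀ i ℓ, y i ℓ = 0 ∨ y i ℓ = 1)
    (hmono : Antitone x)
    (hinv : ∀ (k : ℕ) (i : Fin N), (i : ℕ) < 2 ^ k → x ⟨0, hN⟩ - k ≤ x i) :
    Antitone (nextPop N x y) ∧
      ∀ (k : ℕ) (i : Fin N), (i : ℕ) < 2 ^ k →
        nextPop N x y ⟨0, hN⟩ - k ≤ nextPop N x y i := by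
  classical
  set s : Multiset ℤ :=
    Finset.univ.val.map (fun q : Fin N × Fin 2 => x q.1 + y q.1 q.2) with hs
  set L : List ℤ := s.sort (· ≥ ·) with hLdef
  have hLs : L.Pairwise (· ≥ ·) := Multiset.pairwise_sort _ _
  have hlen : L.length = 2 * N := by
    rw [hLdef, Multiset.length_sort, hs, Multiset.card_map]
    simp [Finset.card_univ, mul_comm]
  have hget : ∀ i : Fin N, nextPop N x y i = L[(i : ℕ)]'(by have := i.2; omega) := by
    intro i
    have hi : (i : ℕ) < L.length := by have := i.2; omega
    simp only [nextPop, ← hLdef]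
    exact List.getD_eq_getElem L 0 hi
  have hy0 : ∀ i ℓ, 0 ≤ y i ℓ := by intro i ℓ; rcases hy i ℓ with h | h <;> simp [h]
  have hy1 : ∀ i ℓ, y i ℓ ≤ 1 := by intro i ℓ; rcases hy i ℓ with h | h <;> simp [h]
  -- the count bound
  have hcount : ∀ t : ℤ, ∀ k : ℕ, t ≤ x ⟨0, hN⟩ - k →
      min (2 ^ k) N * 2 ≤ L.countP (fun a => t ≤ a) := by
    intro t k ht
    have h1 : L.countP (fun a => t ≤ a) = Multiset.countP (fun a => t ≤ a) s := by
      rw [hLdef, ← Multiset.coe_countP, Multiset.sort_eq]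
    have h2 : Multiset.countP (fun a => t ≤ a) s =
        (Finset.univ.filter (fun q : Fin N × Fin 2 => t ≤ x q.1 + y q.1 q.2)).card := by
      rw [hs, Multiset.countP_map]; rfl
    have h3 : (Finset.univ.filter (fun q : Fin N × Fin 2 => t ≤ x q.1)).card ≤
        (Finset.univ.filter (fun q : Fin N × Fin 2 => t ≤ x q.1 + y q.1 q.2)).card := by
      apply Finset.card_le_card
      apply Finset.monotone_filter_right
      intro q hq
      have := hy0 q.1 q.2
      omega
    have h4 : (Finset.univ.filter (fun q : Fin N × Fin 2 => t ≤ x q.1)).card =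
        (Finset.univ.filter (fun j : Fin N => t ≤ x j)).card * 2 := by
      have heq : (Finset.univ.filter (fun q : Fin N × Fin 2 => t ≤ x q.1)) =
          (Finset.univ.filter (fun j : Fin N => t ≤ x j)) ×ˢ (Finset.univ : Finset (Fin 2)) := by
        ext q
        simp [Finset.mem_product]
      rw [heq, Finset.card_product]
      simp
    have h5 : min (2 ^ k) N ≤ (Finset.univ.filter (fun j : Fin N => t ≤ x j)).card := by
      have hinj : ∀ i : Fin (min (2 ^ k) N),
          (⟨(i : ℕ), lt_of_lt_of_le i.2 (min_le_right _ _)⟩ : Fin N) ∈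
            Finset.univ.filter (fun j : Fin N => t ≤ x j) := by
        intro i
        simp only [Finset.mem_filter, Finset.mem_univ, true_and]
        calc t ≤ x ⟨0, hN⟩ - k := ht
        _ ≤ x ⟨(i : ℕ), _⟩ := hinv k _ (lt_of_lt_of_le i.2 (min_le_left _ _))
      calc min (2 ^ k) N = Fintype.card (Fin (min (2 ^ k) N)) := (Fintype.card_fin _).symm
      _ = (Finset.univ : Finset (Fin (min (2 ^ k) N))).card := rfl
      _ ≤ (Finset.univ.filter (fun j : Fin N => t ≤ x j)).card := by
          apply Finset.card_le_card_of_injOn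
            (fun i => ⟨(i : ℕ), lt_of_lt_of_le i.2 (min_le_right _ _)⟩)
            (fun i _ => hinj i)
          intro a _ b _ hab
          exact Fin.ext (by simpa using congrArg Fin.val hab)
    omega
  have hmono' : Antitone (nextPop N x y) := by
    intro i j hij
    rw [hget i, hget j]
    exact sorted_ge_le hLs hij (by have := j.2; omega)
  refine ⟨hmono', ?_⟩
  -- the new maximum exceeds the old one by at most 1
  have hmax : nextPop N x y ⟨0, hN⟩ ≤ x ⟨0, hN⟩ + 1 := by
    rw [hget]
    have hmem : L[(0 : ℕ)]'(by omega) ∈ s := (Multiset.mem_sort _).1 (List.getElem_mem _)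
    rw [hs] at hmem
    obtain ⟨q, _, hq⟩ := Multiset.mem_map.1 hmem
    rw [← hq]
    have h1 : x q.1 ≤ x ⟨0, hN⟩ :=
      hmono (Fin.mk_le_of_le_val (Nat.zero_le _) : (⟨0, hN⟩ : Fin N) ≤ q.1)
    have := hy1 q.1 q.2
    omega
  intro k i hik
  match k, hik with
  | 0, hik =>
    have h0 : (i : ℕ) = 0 := by simpa using hik
    have hieq : i = ⟨0, hN⟩ := Fin.ext h0
    rw [hieq]
    simp
  | (k' + 1), hik =>
    have ht : nextPop N x y ⟨0, hN⟩ - (k' + 1 : ℕ) ≤ x ⟨0, hN⟩ - k' := by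
      push_cast
      omega
    have hcnt := hcount (nextPop N x y ⟨0, hN⟩ - (k' + 1 : ℕ)) k' ht
    rw [hget i]
    apply sorted_ge_get_of_countP hLs (by have := i.2; omega)
    have hiN : (i : ℕ) < N := i.2
    have hpow : (2 : ℕ) ^ (k' + 1) = 2 ^ k' * 2 := pow_succ 2 k'
    omega

/-- If all displacements are in `{0,1}`, the chain is decreasing in the particle index and
satisfies the counting invariant, deterministically. -/
lemma chain_det (Y : ℕ → ℕ → Fin 2 → Ω → ℤ) (ω : Ω)
    (hY : ∀ m i ℓ, Y m i ℓ ω = 0 ∨ Y m i ℓ ω = 1) (n : ℕ) :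
    Antitone (chain N Y n ω) ∧
      ∀ (k : ℕ) (i : Fin N), (i : ℕ) < 2 ^ k →
        chain N Y n ω ⟨0, hN⟩ - k ≤ chain N Y n ω i := by
  induction n with
  | zero =>
    refine ⟨fun i j _ => le_refl _, fun k i _ => ?_⟩
    show (0 : ℤ) - k ≤ 0
    simp
  | succ n ih =>
    exact step_inv hN _ _ (fun i ℓ => hY n i.val ℓ) ih.1 ih.2

end det

/-- `⌈log N / log 2⌉ + 1` is (at least) a base-2 logarithm of `N`. -/
lemma exists_pow_bound (N : ℕ) (hN : 1 ≤ N) :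
    ∃ k : ℕ, N ≤ 2 ^ k ∧ (k : ℤ) = ⌈Real.log N / Real.log 2⌉ + 1 := by
  have hlogb : Real.log N / Real.log 2 = Real.logb 2 N := rfl
  have hN0 : (0 : ℝ) < N := by exact_mod_cast hN
  have h0 : 0 ≤ Real.logb 2 N := Real.logb_nonneg one_lt_two (by exact_mod_cast hN)
  set K : ℤ := ⌈Real.logb 2 N⌉ + 1 with hK
  have hK0 : 0 ≤ K := by
    have := Int.ceil_nonneg h0
    omega
  refine ⟨K.toNat, ?_, by rw [hlogb]; exact_mod_cast Int.toNat_of_nonneg hK0⟩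
  have h1 : Real.logb 2 N ≤ (K.toNat : ℝ) := by
    have h2 : Real.logb 2 N ≤ (⌈Real.logb 2 N⌉ : ℝ) := Int.le_ceil _
    have h3 : ((K.toNat : ℤ) : ℝ) = (K : ℝ) := by exact_mod_cast Int.toNat_of_nonneg hK0
    have h4 : ((K.toNat : ℤ) : ℝ) = ((K.toNat : ℕ) : ℝ) := by push_cast; ring
    rw [← h4, h3, hK]
    push_cast
    linarith
  have h2 := (Real.logb_le_iff_le_rpow one_lt_two hN0).1 h1
  rw [Real.rpow_natCast] at h2
  exact_mod_cast h2

/-- **Proposition (bounded diameter):** for every `N ≥ 1` and every `n ≥ 0`, with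
probability one, `d(X^N_n) = max X^N_n − min X^N_n ≤ ⌈log N / log 2⌉ + 1`. -/
theorem diameter_bound
    (p : ℝ) (hp0 : 0 < p) (hp1 : p < 1)
    (Ω : Type*) [MeasureSpace Ω] [IsProbabilityMeasure (ℙ : Measure Ω)]
    (Y : ℕ → ℕ → Fin 2 → Ω → ℤ)
    (hiid : iIndepFun
      (fun q : ℕ × ℕ × Fin 2 => Y q.1 q.2.1 q.2.2) ℙ)
    (hlaw : ∀ q : ℕ × ℕ × Fin 2, Measure.map (Y q.1 q.2.1 q.2.2) ℙ = bernoulliStep p)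
    (N : ℕ) (hN : 1 ≤ N) (n : ℕ) :
    ∀ᵐ ω ∂ℙ,
      maxPop (chain N Y n ω) - minPop (chain N Y n ω) ≤
        ⌈Real.log N / Real.log 2⌉ + 1 := by
  -- Almost surely all displacements are in {0,1}.
  have hae : ∀ q : ℕ × ℕ × Fin 2, ∀ᵐ ω ∂ℙ,
      Y q.1 q.2.1 q.2.2 ω = 0 ∨ Y q.1 q.2.1 q.2.2 ω = 1 := by
    intro q
    have hmeas : AEMeasurable (Y q.1 q.2.1 q.2.2) ℙ := by
      by_contra h
      have h0 := hlaw q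
      rw [Measure.map_of_not_aemeasurable h] at h0
      have h1 : (bernoulliStep p) Set.univ = 0 := by rw [← h0]; rfl
      rw [bernoulliStep] at h1
      simp only [Measure.add_apply, Measure.smul_apply,
        Measure.dirac_apply' _ MeasurableSet.univ] at h1
      simp at h1
      nlinarith [h1.1, h1.2]
    have hset : MeasurableSet {z : ℤ | ¬(z = 0 ∨ z = 1)} := .of_discrete
    have h2 : ℙ ((Y q.1 q.2.1 q.2.2) ⁻¹' {z : ℤ | ¬(z = 0 ∨ z = 1)}) = 0 := by
      rw [← Measure.map_apply_of_aemeasurable hmeas hset, hlaw q, bernoulliStep]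
      simp [Measure.dirac_apply' _ hset]
    rw [Filter.eventually_iff]
    rw [MeasureTheory.mem_ae_iff]
    convert h2 using 1
    rfl
  have haeAll : ∀ᵐ ω ∂ℙ, ∀ q : ℕ × ℕ × Fin 2,
      Y q.1 q.2.1 q.2.2 ω = 0 ∨ Y q.1 q.2.1 q.2.2 ω = 1 := ae_all_iff.2 hae
  obtain ⟨k, hk2, hkK⟩ := exists_pow_bound N hN
  filter_upwards [haeAll] with ω hω
  have hωY : ∀ m i ℓ, Y m i ℓ ω = 0 ∨ Y m i ℓ ω = 1 := fun m i ℓ => hω (m, i, ℓ)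
  obtain ⟨hmono, hinv⟩ := chain_det hN Y ω hωY n
  obtain ⟨jmax, hjmax⟩ := maxPop_mem hN (chain N Y n ω)
  obtain ⟨jmin, hjmin⟩ := minPop_mem hN (chain N Y n ω)
  have h1 : maxPop (chain N Y n ω) ≤ chain N Y n ω ⟨0, hN⟩ := by
    rw [hjmax]
    exact hmono (Fin.mk_le_of_le_val (Nat.zero_le _))
  have h2 : chain N Y n ω ⟨0, hN⟩ - k ≤ minPop (chain N Y n ω) := by
    rw [hjmin]
    exact hinv k jmin (lt_of_lt_of_le jmin.2 hk2)
  omega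
end
end

section
/- The sequence (v_N(p))_{N≥1} of asymptotic speeds of the branching-selection particle system is non-decreasing in N; consequently there exists v_∞(p) with 0 < v_∞(p) < ∞ such that lim_{N→∞} v_N(p) = v_∞(p). -/
open MeasureTheory ProbabilityTheory Filter

noncomputable section

variable {Ω : Type*}

open List in
/-- In a decreasingly sorted list, at least `i+1` entries are `≥` the `i`-th entry. -/
lemma sorted_lt_countP {l : List ℤ} (hs : l.Pairwise (· ≥ ·)) {i : ℕ} (hi : i < l.length) :
    i < l.countP (fun x => decide (l[i] ≤ x)) := by
  have h1 : l.countP (fun x => decide (l[i] ≤ x))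
      ≥ (l.take (i+1)).countP (fun x => decide (l[i] ≤ x)) :=
    (l.take_sublist (i+1)).countP_le
  have h2 : (l.take (i+1)).countP (fun x => decide (l[i] ≤ x)) = (l.take (i+1)).length := by
    rw [List.countP_eq_length]
    intro x hx
    rw [List.mem_iff_getElem] at hx
    obtain ⟨j, hj, rfl⟩ := hx
    have hj' : j < i + 1 := lt_of_lt_of_le hj (by simpa using List.length_take_le (i+1) l)
    rw [List.getElem_take]
    simp only [decide_eq_true_eq]
    have hjl : j < l.length := lt_of_lt_of_le hj (by simpa using List.length_take_le' ..)
    exact hs.rel_get_of_le (a := ⟨j, hjl⟩) (b := ⟨i, hi⟩) (by simpa using Nat.lt_succ_iff.mp hj')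
  have h3 : (l.take (i+1)).length = i + 1 := by
    rw [List.length_take]; exact min_eq_left (by omega)
  omega

open List in
lemma countP_lt_sorted {l : List ℤ} (hs : l.Pairwise (· ≥ ·)) {i : ℕ} {m : ℤ}
    (h : i < l.countP (fun x => decide (m ≤ x))) :
    ∃ hi : i < l.length, m ≤ l[i] := by
  have hlen : i < l.length := lt_of_lt_of_le h (l.countP_le_length)
  refine ⟨hlen, ?_⟩
  by_contra hlt
  push_neg at hlt
  have hdrop : (l.drop i).countP (fun x => decide (m ≤ x)) = 0 := by
    rw [List.countP_eq_zero]
    intro x hx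
    rw [List.mem_iff_getElem] at hx
    obtain ⟨j, hj, rfl⟩ := hx
    rw [List.getElem_drop]
    simp only [decide_eq_true_eq, not_le]
    have hlj : i + j < l.length := by rw [List.length_drop] at hj; omega
    calc l[i+j] ≤ l[i] := hs.rel_get_of_le (a := ⟨i, hlen⟩) (b := ⟨i+j, hlj⟩) (by simp)
    _ < m := hlt
  have := l.take_append_drop i
  have hcnt : l.countP (fun x => decide (m ≤ x))
      = (l.take i).countP (fun x => decide (m ≤ x)) + (l.drop i).countP (fun x => decide (m ≤ x)) := by
    conv_lhs => rw [← this]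
    rw [List.countP_append]
  have : (l.take i).countP (fun x => decide (m ≤ x)) ≤ i := by
    calc _ ≤ (l.take i).length := List.countP_le_length
    _ ≤ i := by simp [List.length_take]
  omega

lemma sortGE_getD_mono {s t : Multiset ℤ}
    (h : ∀ m : ℤ, s.countP (m ≤ ·) ≤ t.countP (m ≤ ·)) {i : ℕ} (hi : i < Multiset.card s) :
    ((s.sort (· ≥ ·)).getD i 0) ≤ ((t.sort (· ≥ ·)).getD i 0) := by
  have hcnt : ∀ (u : Multiset ℤ) (m : ℤ),
      u.countP (m ≤ ·) = (u.sort (· ≥ ·)).countP (fun x => decide (m ≤ x)) := by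
    intro u m
    conv_lhs => rw [← Multiset.sort_eq u (· ≥ ·)]
    exact Multiset.coe_countP _ _
  have hl1 : i < (s.sort (· ≥ ·)).length := by rwa [Multiset.length_sort]
  set a := (s.sort (· ≥ ·))[i] with ha
  have h1 : i < (s.sort (· ≥ ·)).countP (fun x => decide (a ≤ x)) :=
    sorted_lt_countP (Multiset.pairwise_sort _ _) hl1
  have h2 : i < (t.sort (· ≥ ·)).countP (fun x => decide (a ≤ x)) := by
    rw [← hcnt]; rw [← hcnt] at h1
    exact lt_of_lt_of_le h1 (h a)
  obtain ⟨hi2, hle⟩ := countP_lt_sorted (Multiset.pairwise_sort _ _) h2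
  rw [List.getD_eq_getElem _ _ hl1, List.getD_eq_getElem _ _ hi2]
  exact hle

lemma nextPop_mono {N₁ N₂ : ℕ} (h : N₁ ≤ N₂) (x₁ : Fin N₁ → ℤ) (x₂ : Fin N₂ → ℤ)
    (y : ℕ → Fin 2 → ℤ)
    (hx : ∀ i : Fin N₁, x₁ i ≤ x₂ (Fin.castLE h i)) (i : Fin N₁) :
    nextPop N₁ x₁ (fun j ℓ => y j.val ℓ) i ≤ nextPop N₂ x₂ (fun j ℓ => y j.val ℓ) (Fin.castLE h i) := by
  set f : Fin N₁ × Fin 2 → ℤ := fun q => x₁ q.1 + y q.1.val q.2 with hf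
  set g : Fin N₂ × Fin 2 → ℤ := fun q => x₂ q.1 + y q.1.val q.2 with hg
  set e : Fin N₁ × Fin 2 ↪ Fin N₂ × Fin 2 :=
    (Fin.castLEEmb h).prodMap (Function.Embedding.refl _) with he
  have hfg : ∀ q : Fin N₁ × Fin 2, f q ≤ g (e q) := by
    intro q
    simp only [hf, hg, he, Function.Embedding.prodMap, Fin.castLEEmb]
    exact add_le_add_left (hx q.1) _
  have key : ∀ m : ℤ,
      (Finset.univ.val.map f).countP (m ≤ ·) ≤ (Finset.univ.val.map g).countP (m ≤ ·) := by
    intro m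
    rw [Multiset.countP_map, Multiset.countP_map, ← Multiset.countP_eq_card_filter,
      ← Multiset.countP_eq_card_filter]
    calc Multiset.countP (fun a => m ≤ f a) Finset.univ.val
        ≤ Multiset.countP (fun a => m ≤ g (e a)) Finset.univ.val := by
          rw [Multiset.countP_eq_card_filter, Multiset.countP_eq_card_filter]
          exact Multiset.card_le_card (Multiset.monotone_filter_right _
            (fun a ha => le_trans ha (hfg a)))
      _ = Multiset.countP (fun a => m ≤ g a) (Finset.univ.val.map e) := by
          rw [Multiset.countP_map, ← Multiset.countP_eq_card_filter]
      _ ≤ Multiset.countP (fun a => m ≤ g a) (Finset.univ.val : Multiset (Fin N₂ × Fin 2)) := by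
          apply Multiset.countP_le_of_le
          have : (Finset.univ.map e).val ≤ (Finset.univ : Finset (Fin N₂ × Fin 2)).val :=
            Finset.val_le_iff.mpr (Finset.subset_univ _)
          simpa [Finset.map_val] using this
  have hcard : (i : ℕ) < Multiset.card (Finset.univ.val.map f) := by
    simp only [Multiset.card_map]
    have : Multiset.card (Finset.univ.val : Multiset (Fin N₁ × Fin 2)) = N₁ * 2 := by
      simp [Finset.card_univ]
    rw [this]
    have := i.isLt
    nlinarith [i.isLt]
  exact sortGE_getD_mono key hcard

lemma chain_mono {N₁ N₂ : ℕ} (h : N₁ ≤ N₂) (Y : ℕ → ℕ → Fin 2 → Ω → ℤ) (ω : Ω) :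
    ∀ n : ℕ, ∀ i : Fin N₁, chain N₁ Y n ω i ≤ chain N₂ Y n ω (Fin.castLE h i) := by
  intro n
  induction n with
  | zero => intro i; simp [chain]
  | succ n ih =>
      intro i
      show nextPop N₁ (chain N₁ Y n ω) (fun j ℓ => Y n j.val ℓ ω) i ≤
        nextPop N₂ (chain N₂ Y n ω) (fun j ℓ => Y n j.val ℓ ω) (Fin.castLE h i)
      exact nextPop_mono h _ _ (fun k ℓ => Y n k ℓ ω) ih i

lemma le_maxPop {N : ℕ} (x : Fin N → ℤ) (i : Fin N) : x i ≤ maxPop x := by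
  set l := ((Finset.univ.val.map x).sort (· ≤ ·)) with hl
  have hmem : x i ∈ l := by
    rw [hl, Multiset.mem_sort]
    exact Multiset.mem_map_of_mem _ (Finset.mem_univ_val _)
  have hne : l ≠ [] := List.ne_nil_of_mem hmem
  have : maxPop x = l.getLast hne := by rw [maxPop, ← hl, List.getLastD_eq_getLast? , List.getLast?_eq_getLast hne]; rfl
  rw [this]
  obtain ⟨j, hj, hjv⟩ := List.mem_iff_getElem.mp hmem
  rw [← hjv, List.getLast_eq_getElem]
  exact (Multiset.pairwise_sort _ (· ≤ ·)).rel_get_of_le (a := ⟨j, hj⟩)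
    (b := ⟨l.length - 1, by
      show l.length - 1 < l.length
      have h0 : 0 < l.length := List.length_pos_iff.mpr hne
      omega⟩) (by simp only [Fin.mk_le_mk]; omega)

lemma maxPop_eq_some {N : ℕ} [NeZero N] (x : Fin N → ℤ) : ∃ j, maxPop x = x j := by
  set l := ((Finset.univ.val.map x).sort (· ≤ ·)) with hl
  have hlen : l.length = N := by rw [hl, Multiset.length_sort]; simp
  have hne : l ≠ [] := by
    intro hc; rw [hc] at hlen; simp at hlen; exact (NeZero.ne N) hlen.symm
  have hm : maxPop x = l.getLast hne := by
    rw [maxPop, ← hl, List.getLastD_eq_getLast?, List.getLast?_eq_getLast hne]; rfl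
  obtain ⟨a, ham, hal⟩ : ∃ a, maxPop x = a ∧ a ∈ l := ⟨_, hm, List.getLast_mem hne⟩
  rw [hl, Multiset.mem_sort] at hal
  obtain ⟨j, _, hj⟩ := Multiset.mem_map.mp hal
  exact ⟨j, by rw [ham, ← hj]⟩

lemma maxPop_mono {N₁ N₂ : ℕ} [NeZero N₁] (h : N₁ ≤ N₂) (x₁ : Fin N₁ → ℤ) (x₂ : Fin N₂ → ℤ)
    (hx : ∀ i : Fin N₁, x₁ i ≤ x₂ (Fin.castLE h i)) : maxPop x₁ ≤ maxPop x₂ := by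
  obtain ⟨j, hj⟩ := maxPop_eq_some x₁
  rw [hj]
  exact le_trans (hx j) (le_maxPop _ _)

lemma nextPop_mem {N : ℕ} (x : Fin N → ℤ) (y : Fin N → Fin 2 → ℤ) (i : Fin N) :
    ∃ (j : Fin N) (ℓ : Fin 2), nextPop N x y i = x j + y j ℓ := by
  set s := (Finset.univ.val.map fun q : Fin N × Fin 2 => x q.1 + y q.1 q.2) with hs
  have hlen : (s.sort (· ≥ ·)).length = N * 2 := by
    rw [Multiset.length_sort, hs, Multiset.card_map]; simp [Finset.card_univ]
  have hi : (i : ℕ) < (s.sort (· ≥ ·)).length := by rw [hlen]; have := i.isLt; omega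
  have : nextPop N x y i = (s.sort (· ≥ ·))[(i:ℕ)] := by
    rw [nextPop, List.getD_eq_getElem _ _ hi]
  obtain ⟨a, ham, hal⟩ : ∃ a, nextPop N x y i = a ∧ a ∈ s :=
    ⟨_, this, by rw [← Multiset.mem_sort (· ≥ ·)]; exact List.getElem_mem _⟩
  rw [hs] at hal
  obtain ⟨q, _, hq⟩ := Multiset.mem_map.mp hal
  exact ⟨q.1, q.2, by rw [ham, ← hq]⟩

lemma le_nextPop_zero {N : ℕ} (x : Fin N → ℤ) (y : Fin N → Fin 2 → ℤ) (i₀ : Fin N)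
    (j : Fin N) (ℓ : Fin 2) (h0 : (i₀ : ℕ) = 0) :
    x j + y j ℓ ≤ nextPop N x y i₀ := by
  set s := (Finset.univ.val.map fun q : Fin N × Fin 2 => x q.1 + y q.1 q.2) with hs
  have hmem : x j + y j ℓ ∈ s.sort (· ≥ ·) := by
    rw [Multiset.mem_sort, hs]
    exact Multiset.mem_map.mpr ⟨(j, ℓ), Finset.mem_univ_val _, rfl⟩
  obtain ⟨k, hk, hkv⟩ := List.mem_iff_getElem.mp hmem
  have h0' : (0:ℕ) < (s.sort (· ≥ ·)).length := by omega
  have : nextPop N x y i₀ = (s.sort (· ≥ ·))[(0:ℕ)] := by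
    rw [nextPop, h0, List.getD_eq_getElem _ _ h0']
  rw [this, ← hkv]
  exact (Multiset.pairwise_sort _ (· ≥ ·)).rel_get_of_le (a := ⟨0, h0'⟩) (b := ⟨k, hk⟩) (by simp)

lemma bernoulliStep_apply (p : ℝ) (s : Set ℤ) :
    bernoulliStep p s =
      ENNReal.ofReal p * s.indicator 1 1 + ENNReal.ofReal (1 - p) * s.indicator 1 0 := by
  simp [bernoulliStep, Measure.add_apply, Measure.smul_apply, smul_eq_mul,
    Measure.dirac_apply' _ (MeasurableSet.of_discrete)]

lemma chain_one_lb (Y : ℕ → ℕ → Fin 2 → Ω → ℤ) (ω : Ω) :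
    ∀ n, ∀ i : Fin 1, (∑ k ∈ Finset.range n, Y k 0 0 ω) ≤ chain 1 Y n ω i := by
  intro n
  induction n with
  | zero => intro i; simp [chain]
  | succ n ih =>
      intro i
      show _ ≤ nextPop 1 (chain 1 Y n ω) (fun j ℓ => Y n j.val ℓ ω) i
      have h0 : (i : ℕ) = 0 := by omega
      have key := le_nextPop_zero (chain 1 Y n ω) (fun j ℓ => Y n j.val ℓ ω) i
        ⟨0, by omega⟩ ⟨0, by omega⟩ h0
      rw [Finset.sum_range_succ]
      calc (∑ k ∈ Finset.range n, Y k 0 0 ω) + Y n 0 0 ω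
          ≤ chain 1 Y n ω ⟨0, by omega⟩ + Y n 0 0 ω := add_le_add_left (ih _) _
        _ ≤ _ := key

/-- **Proposition (monotonicity of the speeds and existence of the limit):** the sequence
`(v_N(p))_{N ≥ 1}` is non-decreasing in `N`; consequently there exists
`0 < v_∞(p) < ∞` with `v_N(p) → v_∞(p)` as `N → ∞`. -/
theorem speed_monotone_and_limit
    (p : ℝ) (hp0 : 0 < p) (hp1 : p < 1)
    (Ω : Type*) [MeasureSpace Ω] [IsProbabilityMeasure (ℙ : Measure Ω)]
    (Y : ℕ → ℕ → Fin 2 → Ω → ℤ)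
    (hiid : iIndepFun
      (fun q : ℕ × ℕ × Fin 2 => Y q.1 q.2.1 q.2.2) ℙ)
    (hlaw : ∀ q : ℕ × ℕ × Fin 2, Measure.map (Y q.1 q.2.1 q.2.2) ℙ = bernoulliStep p)
    (v : ℕ → ℝ)
    (hv : ∀ N, 1 ≤ N → ∀ᵐ ω ∂ℙ,
      Tendsto (fun n => (maxPop (chain N Y n ω) : ℝ) / n) atTop (nhds (v N))) :
    (∀ N₁ N₂ : ℕ, 1 ≤ N₁ → N₁ ≤ N₂ → v N₁ ≤ v N₂) ∧
      ∃ vinf : ℝ, 0 < vinf ∧ Tendsto v atTop (nhds vinf) := by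
  haveI : (MeasureTheory.ae (ℙ : Measure Ω)).NeBot :=
    MeasureTheory.ae_neBot.mpr (IsProbabilityMeasure.ne_zero ℙ)
  -- the step variables are a.e.-measurable
  have hBne : bernoulliStep p ≠ 0 := by
    intro h
    have h1 : bernoulliStep p ({1} : Set ℤ) = ENNReal.ofReal p := by
      rw [bernoulliStep_apply]; simp
    rw [h] at h1
    simp only [Measure.coe_zero, Pi.zero_apply] at h1
    exact absurd h1.symm (by simpa using (ENNReal.ofReal_pos.mpr hp0).ne')
  have haem : ∀ q : ℕ × ℕ × Fin 2, AEMeasurable (Y q.1 q.2.1 q.2.2) ℙ := by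
    intro q; by_contra hc
    exact hBne (by rw [← hlaw q, Measure.map_of_not_aemeasurable hc])
  -- a.e. all steps are 0 or 1
  have hE : ∀ᵐ ω ∂ℙ, ∀ q : ℕ × ℕ × Fin 2,
      Y q.1 q.2.1 q.2.2 ω = 0 ∨ Y q.1 q.2.1 q.2.2 ω = 1 := by
    rw [ae_all_iff]
    intro q
    have hnull : ℙ ((Y q.1 q.2.1 q.2.2) ⁻¹' (({0, 1} : Set ℤ)ᶜ)) = 0 := by
      rw [← Measure.map_apply_of_aemeasurable (haem q) MeasurableSet.of_discrete, hlaw q,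
        bernoulliStep_apply]
      simp
    rw [ae_iff]
    refine measure_mono_null ?_ hnull
    intro ω hω
    simp only [Set.mem_setOf_eq, not_or] at hω
    simp [Set.mem_preimage, hω.1, hω.2]
  -- monotonicity
  have mono : ∀ N₁ N₂ : ℕ, 1 ≤ N₁ → N₁ ≤ N₂ → v N₁ ≤ v N₂ := by
    intro N₁ N₂ h1 h12
    haveI : NeZero N₁ := ⟨by omega⟩
    obtain ⟨ω, hω₁, hω₂⟩ := ((hv N₁ h1).and (hv N₂ (le_trans h1 h12))).exists
    refine le_of_tendsto_of_tendsto hω₁ hω₂ ?_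
    filter_upwards [eventually_ge_atTop 1] with n hn
    have hmax : maxPop (chain N₁ Y n ω) ≤ maxPop (chain N₂ Y n ω) :=
      maxPop_mono h12 _ _ (chain_mono h12 Y ω n)
    have hn' : (0:ℝ) < n := by exact_mod_cast hn
    exact (div_le_div_iff_of_pos_right hn').mpr (by exact_mod_cast hmax)
  -- upper bound
  have hub : ∀ N, 1 ≤ N → v N ≤ 1 := by
    intro N h1
    haveI : NeZero N := ⟨by omega⟩
    obtain ⟨ω, hω, hωE⟩ := ((hv N h1).and hE).exists
    have hch : ∀ n, ∀ i : Fin N, chain N Y n ω i ≤ (n : ℤ) := by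
      intro n
      induction n with
      | zero => intro i; simp [chain]
      | succ n ih =>
          intro i
          show nextPop N (chain N Y n ω) (fun j ℓ => Y n j.val ℓ ω) i ≤ _
          obtain ⟨j, ℓ, hj⟩ := nextPop_mem (chain N Y n ω) (fun j ℓ => Y n j.val ℓ ω) i
          rw [hj]
          have hy : Y n j.val ℓ ω ≤ 1 := by
            have h' : Y n j.val ℓ ω = 0 ∨ Y n j.val ℓ ω = 1 := hωE (n, j.val, ℓ)
            omega
          have := ih j
          push_cast
          omega
    refine le_of_tendsto hω ?_
    filter_upwards [eventually_ge_atTop 1] with n hn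
    obtain ⟨j, hj⟩ := maxPop_eq_some (chain N Y n ω)
    have hn' : (0:ℝ) < n := by exact_mod_cast hn
    rw [div_le_one hn', hj]
    exact_mod_cast hch n j
  -- the SLLN lower bound
  set Z : ℕ → Ω → ℝ := fun n ω => ((Y n 0 0 ω : ℤ) : ℝ) with hZ
  have haemZ : ∀ n, AEMeasurable (Z n) ℙ := fun n =>
    (Measurable.of_discrete (f := fun x : ℤ => (x : ℝ))).comp_aemeasurable (haem (n, 0, 0))
  have hint : Integrable (Z 0) ℙ := by
    refine ⟨(haemZ 0).aestronglyMeasurable, HasFiniteIntegral.of_bounded (C := 1) ?_⟩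
    filter_upwards [hE] with ω hω
    rcases hω (0, 0, 0) with h | h <;> simp [hZ, h]
  have hindep : Pairwise (Function.onFun (IndepFun · · ℙ) Z) := by
    intro i j hij
    have h := hiid.indepFun (i := (i, 0, 0)) (j := (j, 0, 0)) (by simp [hij])
    exact h.comp Measurable.of_discrete Measurable.of_discrete
  have hident : ∀ i, IdentDistrib (Z i) (Z 0) ℙ ℙ := by
    intro i
    refine ⟨haemZ i, haemZ 0, ?_⟩
    have h1 : Measure.map (Z i) ℙ
        = Measure.map (fun x : ℤ => (x : ℝ)) (Measure.map (Y i 0 0) ℙ) :=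
      (AEMeasurable.map_map_of_aemeasurable
        (Measurable.of_discrete.aemeasurable) (haem (i, 0, 0))).symm
    have h2 : Measure.map (Z 0) ℙ
        = Measure.map (fun x : ℤ => (x : ℝ)) (Measure.map (Y 0 0 0) ℙ) :=
      (AEMeasurable.map_map_of_aemeasurable
        (Measurable.of_discrete.aemeasurable) (haem (0, 0, 0))).symm
    rw [h1, h2, hlaw ⟨i, 0, 0⟩, hlaw ⟨0, 0, 0⟩]
  have hsl := ProbabilityTheory.strong_law_ae Z hint hindep hident
  have hEpos : 0 < 𝔼[Z 0] := by
    have hnn : 0 ≤ᵐ[ℙ] Z 0 := by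
      filter_upwards [hE] with ω hω
      rcases hω (0, 0, 0) with h | h <;> simp [hZ, h]
    rw [integral_pos_iff_support_of_nonneg_ae hnn hint]
    have hsupp : Function.support (Z 0) = (Y 0 0 0) ⁻¹' (({0} : Set ℤ)ᶜ) := by
      ext ω
      simp [hZ, Function.mem_support]
    rw [hsupp, ← Measure.map_apply_of_aemeasurable (haem (0, 0, 0)) MeasurableSet.of_discrete,
      hlaw ⟨0, 0, 0⟩, bernoulliStep_apply]
    simpa using ENNReal.ofReal_pos.mpr hp0
  have hv1 : 𝔼[Z 0] ≤ v 1 := by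
    obtain ⟨ω, hωsl, hω1⟩ := (hsl.and (hv 1 le_rfl)).exists
    refine le_of_tendsto_of_tendsto hωsl hω1 ?_
    filter_upwards [eventually_ge_atTop 1] with n hn
    have hn' : (0:ℝ) < n := by exact_mod_cast hn
    have hsum : (∑ k ∈ Finset.range n, Y k 0 0 ω) ≤ maxPop (chain 1 Y n ω) :=
      le_trans (chain_one_lb Y ω n ⟨0, by omega⟩) (le_maxPop _ _)
    have hcast : (n : ℝ)⁻¹ • (∑ i ∈ Finset.range n, Z i ω)
        = ((∑ k ∈ Finset.range n, Y k 0 0 ω : ℤ) : ℝ) / n := by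
      rw [smul_eq_mul, inv_mul_eq_div]
      push_cast [hZ]
      rfl
    rw [hcast]
    exact (div_le_div_iff_of_pos_right hn').mpr (by exact_mod_cast hsum)
  -- conclusion
  set w : ℕ → ℝ := fun n => v (n + 1) with hw
  have hwmono : Monotone w :=
    monotone_nat_of_le_succ (fun n => mono (n + 1) (n + 2) (by omega) (by omega))
  have hwbdd : BddAbove (Set.range w) := ⟨1, by rintro _ ⟨n, rfl⟩; exact hub (n + 1) (by omega)⟩
  have hwt := tendsto_atTop_ciSup hwmono hwbdd
  refine ⟨mono, ⨆ n, w n, ?_, ?_⟩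
  · calc (0:ℝ) < 𝔼[Z 0] := hEpos
      _ ≤ v 1 := hv1
      _ = w 0 := rfl
      _ ≤ ⨆ n, w n := le_ciSup hwbdd 0
  · exact (tendsto_add_atTop_iff_nat 1).mp hwt


end
end

section
/- Let 0 < v₁ < v₂ < 1, let m ≥ 1 and n ≥ 1 be integers, and let z₀ = 0, z₁, …, z_n be a sequence of reals with increments z_{i+1} − z_i ∈ {0,1} such that z_n ≥ v₂·n. Then the number of indices i ∈ {0,…,n−m} such that z_{i+k} − z_i ≥ v₁·k for all k ∈ {0,…,m} is at least ((v₂ − v₁)/(1 − v₁))·(n/m) − 1/(1 − v₁). -/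
open Filter

/-- **Lemma (Pemantle, Lemma 5.2; deterministic form):** let `0 < v₁ < v₂ < 1`, let
`m, n ≥ 1`, and let `z₀ = 0, z₁, …, z_n` have increments in `{0,1}` with `z_n ≥ v₂·n`.
Then the number of indices `i ∈ {0,…,n−m}` from which the path ascends at rate at least
`v₁` for `m` consecutive steps is at least `((v₂ − v₁)/(1 − v₁))·(n/m) − 1/(1 − v₁)`. -/
theorem many_good_indices
    (v₁ v₂ : ℝ) (h0 : 0 < v₁) (h12 : v₁ < v₂) (h21 : v₂ < 1)
    (m n : ℕ) (hm : 1 ≤ m) (hn : 1 ≤ n)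
    (z : ℕ → ℝ) (hz0 : z 0 = 0)
    (hstep : ∀ i < n, z (i + 1) - z i = 0 ∨ z (i + 1) - z i = 1)
    (hzn : v₂ * n ≤ z n) :
    (v₂ - v₁) / (1 - v₁) * ((n : ℝ) / m) - 1 / (1 - v₁) ≤
      (((Finset.range (n - m + 1)).filter
        fun i => ∀ k ≤ m, v₁ * k ≤ z (i + k) - z i).card : ℝ) := by
  have hv1 : (0:ℝ) < 1 - v₁ := by linarith
  have hm0 : (0:ℝ) ≤ (m:ℝ) := by positivity
  set G := (Finset.range (n - m + 1)).filter
      (fun i => ∀ k ≤ m, v₁ * k ≤ z (i + k) - z i) with hG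
  have hub : ∀ a t : ℕ, a + t ≤ n → z (a + t) - z a ≤ (t : ℝ) := by
    intro a t
    induction t with
    | zero => simp
    | succ t ih =>
      intro h
      have ht := ih (by omega)
      have hs := hstep (a + t) (by omega)
      have he : a + (t + 1) = (a + t) + 1 := by omega
      rw [he]
      push_cast
      rcases hs with h' | h' <;> linarith
  have key : ∀ d i : ℕ, i + d = n →
      z n - z i ≤ v₁ * d + (1 - v₁) * m * (((G.filter fun j => i ≤ j).card : ℝ) + 1) := by
    intro d
    induction d using Nat.strong_induction_on with
    | _ d ih =>
      intro i hid
      have hcnn : (0:ℝ) ≤ ((G.filter fun j => i ≤ j).card : ℝ) := by positivity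
      by_cases hdm : d < m
      · have h1 : z n - z i ≤ (d : ℝ) := by
          have := hub i d (by omega); rwa [hid] at this
        have hdm' : (d : ℝ) + 1 ≤ (m : ℝ) := by exact_mod_cast hdm
        nlinarith [mul_nonneg (mul_nonneg hv1.le hm0) hcnn,
          mul_nonneg hv1.le (by linarith : (0:ℝ) ≤ (m:ℝ) - ((d:ℝ) + 1))]
      · push_neg at hdm
        by_cases hg : ∀ k ≤ d, v₁ * k ≤ z (i + k) - z i
        · have hiG : i ∈ G := by
            simp only [hG, Finset.mem_filter, Finset.mem_range]
            exact ⟨by omega, fun k hk => hg k (le_trans hk hdm)⟩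
          have hrec := ih (d - m) (by omega) (i + m) (by omega)
          have hzm := hub i m (by omega)
          have hcard : ((G.filter fun j => i + m ≤ j).card : ℝ) + 1
              ≤ ((G.filter fun j => i ≤ j).card : ℝ) := by
            have hss : insert i (G.filter fun j => i + m ≤ j) ⊆ G.filter fun j => i ≤ j := by
              intro x hx
              rcases Finset.mem_insert.1 hx with rfl | hx
              · exact Finset.mem_filter.2 ⟨hiG, le_refl _⟩
              · rcases Finset.mem_filter.1 hx with ⟨h₁, h₂⟩
                exact Finset.mem_filter.2 ⟨h₁, by omega⟩
            have hni : i ∉ G.filter fun j => i + m ≤ j := by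
              intro hx
              have := (Finset.mem_filter.1 hx).2
              omega
            have hle := Finset.card_le_card hss
            rw [Finset.card_insert_of_notMem hni] at hle
            exact_mod_cast hle
          have hdc : ((d - m : ℕ) : ℝ) = (d : ℝ) - m := by
            push_cast [Nat.cast_sub hdm]; ring
          rw [hdc] at hrec
          nlinarith [mul_nonneg (mul_nonneg hv1.le hm0)
            (by linarith : (0:ℝ) ≤ ((G.filter fun j => i ≤ j).card : ℝ)
              - ((G.filter fun j => i + m ≤ j).card : ℝ) - 1)]
        · push_neg at hg
          obtain ⟨k, hkd, hlt⟩ := hg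
          have hk1 : 1 ≤ k := by
            by_contra h
            have hk0 : k = 0 := by omega
            subst hk0; simp at hlt
          have hrec := ih (d - k) (by omega) (i + k) (by omega)
          have hcard : ((G.filter fun j => i + k ≤ j).card : ℝ)
              ≤ ((G.filter fun j => i ≤ j).card : ℝ) := by
            have hss : (G.filter fun j => i + k ≤ j) ⊆ G.filter fun j => i ≤ j := by
              intro x hx
              rcases Finset.mem_filter.1 hx with ⟨h₁, h₂⟩
              exact Finset.mem_filter.2 ⟨h₁, by omega⟩
            exact_mod_cast Finset.card_le_card hss
          have hdc : ((d - k : ℕ) : ℝ) = (d : ℝ) - k := by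
            push_cast [Nat.cast_sub hkd]; ring
          rw [hdc] at hrec
          nlinarith [mul_nonneg (mul_nonneg hv1.le hm0)
            (by linarith : (0:ℝ) ≤ ((G.filter fun j => i ≤ j).card : ℝ)
              - ((G.filter fun j => i + k ≤ j).card : ℝ))]
  have hmain := key n 0 (by omega)
  rw [hz0, sub_zero] at hmain
  have hfe : (G.filter fun j => 0 ≤ j) = G := by
    apply Finset.filter_true_of_mem; intro x _; omega
  rw [hfe] at hmain
  set c : ℝ := (G.card : ℝ) with hc
  have hcnn : (0:ℝ) ≤ c := by positivity
  have hmpos : (0:ℝ) < (m:ℝ) := by exact_mod_cast hm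
  have h1 : (v₂ - v₁) * n ≤ (1 - v₁) * m * (c + 1) := by nlinarith
  have h2 : (v₂ - v₁) / (1 - v₁) * ((n : ℝ) / m) ≤ c + 1 := by
    rw [div_mul_div_comm, div_le_iff₀ (by positivity)]
    linarith [h1, (by ring : (1 - v₁) * (m:ℝ) * (c + 1) = (c + 1) * ((1 - v₁) * m))]
  have h3 : (1:ℝ) ≤ 1 / (1 - v₁) := by
    rw [le_div_iff₀ hv1]; linarith
  linarith
end

section
/- Let 0 < p < 1/2, 0 < α < v(p) and m ≥ 1, and let B be the event that min X^N_i < (v(p) − α)·i for all 1 ≤ i ≤ m. Then for every N ≥ 1, the asymptotic speed satisfies v_N(p) ≥ (v(p) − α)·(1 − m·P(B)). -/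
open MeasureTheory ProbabilityTheory Filter

noncomputable section

variable {Ω : Type*}

/-- The large deviations rate function `Λ` for sums of i.i.d. Bernoulli(`p`) variables. -/
def rateFn (p x : ℝ) : ℝ :=
  x * Real.log (x / p) + (1 - x) * Real.log ((1 - x) / (1 - p))

namespace BSAux

lemma sorted_get_le_iff {l : List ℤ} (hl : l.Pairwise (· ≥ ·)) {i : ℕ} (h : i < l.length) (t : ℤ) :
    t ≤ l.get ⟨i, h⟩ ↔ i < l.countP (fun a => decide (t ≤ a)) := by
  constructor
  · intro ht
    have h2 := (l.take_sublist (i+1)).countP_le (p := fun a => decide (t ≤ a))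
    have h1 : (l.take (i+1)).countP (fun a => decide (t ≤ a)) = (l.take (i+1)).length := by
      rw [List.countP_eq_length]
      intro a ha
      rw [List.mem_take_iff_getElem] at ha
      obtain ⟨j, hj, rfl⟩ := ha
      have hj' : j < l.length := by omega
      have hge : l.get ⟨j, hj'⟩ ≥ l.get ⟨i, h⟩ := hl.rel_get_of_le (by
        simp only [Fin.mk_le_mk]; omega)
      simp only [decide_eq_true_eq, List.getElem_take]
      exact le_trans ht (by simpa using hge)
    have h3 : (l.take (i+1)).length = i+1 := by rw [List.length_take]; omega
    omega
  · intro hc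
    by_contra hti
    push_neg at hti
    have hsplit : l.countP (fun a => decide (t ≤ a)) =
        (l.take i).countP (fun a => decide (t ≤ a)) + (l.drop i).countP (fun a => decide (t ≤ a)) := by
      conv_lhs => rw [← List.take_append_drop i l]
      rw [List.countP_append]
    have hz : (l.drop i).countP (fun a => decide (t ≤ a)) = 0 := by
      rw [List.countP_eq_zero]
      intro a ha
      rw [List.mem_iff_getElem] at ha
      obtain ⟨j, hj, rfl⟩ := ha
      have hjl : i + j < l.length := by
        have := List.length_drop (i := i) (l := l); omega
      have hge : l.get ⟨i, h⟩ ≥ l.get ⟨i + j, hjl⟩ := hl.rel_get_of_le (by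
        simp only [Fin.mk_le_mk]; omega)
      have : (l.drop i)[j] = l.get ⟨i + j, hjl⟩ := by
        simp [List.getElem_drop]
      rw [this]
      simp only [decide_eq_true_eq, not_le]
      calc l.get ⟨i+j, hjl⟩ ≤ l.get ⟨i, h⟩ := hge
        _ < t := hti
    have h4 := (l.take i).countP_le_length (p := fun a => decide (t ≤ a))
    have h5 : (l.take i).length ≤ i := by rw [List.length_take]; omega
    omega

variable {N : ℕ}

lemma length_sort_pop (x : Fin N → ℤ) (y : Fin N → Fin 2 → ℤ) :
    (((Finset.univ.val.map fun q : Fin N × Fin 2 => x q.1 + y q.1 q.2)).sort (· ≥ ·)).length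
      = 2 * N := by
  rw [Multiset.length_sort, Multiset.card_map]
  simp [Finset.card_univ, mul_comm]

lemma nextPop_eq_get (x : Fin N → ℤ) (y : Fin N → Fin 2 → ℤ) (i : Fin N) :
    nextPop N x y i =
      (((Finset.univ.val.map fun q : Fin N × Fin 2 => x q.1 + y q.1 q.2)).sort (· ≥ ·)).get
        ⟨i, by rw [length_sort_pop]; omega⟩ := by
  rw [nextPop, List.getD_eq_getElem]
  rfl

lemma nextPop_mem (x : Fin N → ℤ) (y : Fin N → Fin 2 → ℤ) (i : Fin N) :
    ∃ q : Fin N × Fin 2, nextPop N x y i = x q.1 + y q.1 q.2 := by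
  have h : nextPop N x y i ∈
      ((Finset.univ.val.map fun q : Fin N × Fin 2 => x q.1 + y q.1 q.2)).sort (· ≥ ·) := by
    rw [nextPop_eq_get]
    exact List.get_mem _ _
  rw [Multiset.mem_sort, Multiset.mem_map] at h
  obtain ⟨q, -, hq⟩ := h
  exact ⟨q, hq.symm⟩

lemma nextPop_mono {x x' : Fin N → ℤ} (hxx : ∀ j, x j ≤ x' j) (y : Fin N → Fin 2 → ℤ)
    (i : Fin N) : nextPop N x y i ≤ nextPop N x' y i := by
  rw [nextPop_eq_get, nextPop_eq_get]
  set t := (((Finset.univ.val.map fun q : Fin N × Fin 2 => x q.1 + y q.1 q.2)).sort (· ≥ ·)).get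
        ⟨i, by rw [length_sort_pop]; omega⟩ with ht
  rw [sorted_get_le_iff (Multiset.pairwise_sort _ _) _ t]
  have h1 : (i : ℕ) < (((Finset.univ.val.map fun q : Fin N × Fin 2 => x q.1 + y q.1 q.2)).sort
      (· ≥ ·)).countP (fun a => decide (t ≤ a)) :=
    (sorted_get_le_iff (Multiset.pairwise_sort _ _) (by rw [length_sort_pop]; omega) t).mp
      (le_of_eq ht)
  -- relate countP on sort to Multiset.countP
  have key : ∀ (z : Fin N → ℤ),
      ((Finset.univ.val.map fun q : Fin N × Fin 2 => z q.1 + y q.1 q.2).sort (· ≥ ·)).countP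
        (fun a => decide (t ≤ a))
      = Multiset.countP (fun a => t ≤ a)
          (Finset.univ.val.map fun q : Fin N × Fin 2 => z q.1 + y q.1 q.2) := by
    intro z
    rw [← Multiset.coe_countP]
    rw [Multiset.sort_eq]
  rw [key] at h1 ⊢
  refine lt_of_lt_of_le h1 ?_
  rw [Multiset.countP_map, Multiset.countP_map]
  apply Multiset.card_le_card
  apply Multiset.monotone_filter_right
  intro q hq
  exact le_trans hq (by have := hxx q.1; omega)

lemma nextPop_add (x : Fin N → ℤ) (c : ℤ) (y : Fin N → Fin 2 → ℤ) (i : Fin N) :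
    nextPop N (fun j => x j + c) y i = nextPop N x y i + c := by
  have hmap : (Finset.univ.val.map fun q : Fin N × Fin 2 => (x q.1 + c) + y q.1 q.2)
      = (Finset.univ.val.map fun q : Fin N × Fin 2 => x q.1 + y q.1 q.2).map (· + c) := by
    rw [Multiset.map_map]
    apply Multiset.map_congr rfl
    intro q _
    simp; ring
  have hsort : ((Finset.univ.val.map fun q : Fin N × Fin 2 => x q.1 + y q.1 q.2).map
        (· + c)).sort (· ≥ ·)
      = ((Finset.univ.val.map fun q : Fin N × Fin 2 => x q.1 + y q.1 q.2).sort (· ≥ ·)).map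
        (· + c) := by
    refine (fun hp h1 h2 => List.Perm.eq_of_pairwise' (r := (· ≥ ·)) h1 h2 hp) ?_ ?_ ?_
    · rw [← Multiset.coe_eq_coe]
      rw [Multiset.sort_eq]
      rw [← Multiset.map_coe, Multiset.sort_eq]
    · exact Multiset.pairwise_sort _ _
    · exact List.Pairwise.map _ (fun a b hab => by simp at hab ⊢; omega)
        (Multiset.pairwise_sort _ _)
  have hlt : (i : ℕ) < (((Finset.univ.val.map
      fun q : Fin N × Fin 2 => x q.1 + y q.1 q.2)).sort (· ≥ ·)).length := by
    rw [length_sort_pop]; omega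
  simp only [nextPop]
  rw [hmap, hsort]
  rw [List.getD_eq_getElem _ _ (by simpa using hlt), List.getD_eq_getElem _ _ hlt]
  simp

lemma getLastD_mem {l : List ℤ} (hl : l ≠ []) (d : ℤ) : l.getLastD d ∈ l := by
  induction l generalizing d with
  | nil => simp at hl
  | cons b t ih =>
    rw [List.getLastD_cons]
    rcases eq_or_ne t (List.nil (α := ℤ)) with rfl | ht
    · simp
    · exact List.mem_cons_of_mem _ (ih ht b)

lemma sorted_le_getLastD {l : List ℤ} (hl : l.Pairwise (· ≤ ·)) {a : ℤ} (ha : a ∈ l) (d : ℤ) :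
    a ≤ l.getLastD d := by
  induction l generalizing d with
  | nil => simp at ha
  | cons b t ih =>
    rw [List.getLastD_cons]
    rw [List.pairwise_cons] at hl
    rcases List.mem_cons.mp ha with rfl | hat
    · rcases eq_or_ne t (List.nil (α := ℤ)) with rfl | ht
      · simp
      · exact hl.1 _ (getLastD_mem ht a)
    · exact ih hl.2 hat b

lemma sorted_headD_le {l : List ℤ} (hl : l.Pairwise (· ≤ ·)) {a : ℤ} (ha : a ∈ l) :
    l.headD 0 ≤ a := by
  cases l with
  | nil => simp at ha
  | cons b t =>
    rw [List.pairwise_cons] at hl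
    rcases List.mem_cons.mp ha with rfl | hat
    · simp
    · simpa using hl.1 _ hat

lemma headD_mem {l : List ℤ} (hl : l ≠ []) (d : ℤ) : l.headD d ∈ l := by
  cases l with
  | nil => simp at hl
  | cons b t => simp

lemma sort_map_ne_nil (hN : 0 < N) (x : Fin N → ℤ) :
    (Finset.univ.val.map x).sort (· ≤ ·) ≠ [] := by
  intro h
  have := Multiset.length_sort (α := ℤ) (r := (· ≤ ·)) (s := Finset.univ.val.map x)
  rw [h] at this
  simp [Finset.card_univ] at this
  omega

lemma minPop_le (x : Fin N → ℤ) (j : Fin N) : minPop x ≤ x j := by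
  apply sorted_headD_le (Multiset.pairwise_sort _ _)
  rw [Multiset.mem_sort, Multiset.mem_map]
  exact ⟨j, Finset.mem_univ_val _, rfl⟩

lemma le_maxPop (x : Fin N → ℤ) (j : Fin N) : x j ≤ maxPop x := by
  apply sorted_le_getLastD (Multiset.pairwise_sort _ _)
  rw [Multiset.mem_sort, Multiset.mem_map]
  exact ⟨j, Finset.mem_univ_val _, rfl⟩

lemma exists_minPop (hN : 0 < N) (x : Fin N → ℤ) : ∃ j, minPop x = x j := by
  have h := headD_mem (sort_map_ne_nil hN x) 0
  rw [Multiset.mem_sort, Multiset.mem_map] at h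
  obtain ⟨j, -, hj⟩ := h
  exact ⟨j, hj.symm⟩

lemma exists_maxPop (hN : 0 < N) (x : Fin N → ℤ) : ∃ j, maxPop x = x j := by
  have h := getLastD_mem (sort_map_ne_nil hN x) 0
  rw [Multiset.mem_sort, Multiset.mem_map] at h
  obtain ⟨j, -, hj⟩ := h
  exact ⟨j, hj.symm⟩

lemma minPop_le_maxPop (hN : 0 < N) (x : Fin N → ℤ) : minPop x ≤ maxPop x := by
  obtain ⟨j, hj⟩ := exists_minPop hN x
  rw [hj]
  exact le_maxPop x j

lemma minPop_const (hN : 0 < N) (c : ℤ) : minPop (fun _ : Fin N => c) = c := by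
  obtain ⟨j, hj⟩ := exists_minPop hN (fun _ : Fin N => c); exact hj

lemma maxPop_const (hN : 0 < N) (c : ℤ) : maxPop (fun _ : Fin N => c) = c := by
  obtain ⟨j, hj⟩ := exists_maxPop hN (fun _ : Fin N => c); exact hj

lemma minPop_mono {x x' : Fin N → ℤ} (hN : 0 < N) (h : ∀ j, x j ≤ x' j) :
    minPop x ≤ minPop x' := by
  obtain ⟨j, hj⟩ := exists_minPop hN x'
  rw [hj]
  exact le_trans (minPop_le x j) (h j)

lemma le_minPop {x : Fin N → ℤ} (hN : 0 < N) {c : ℤ} (h : ∀ j, c ≤ x j) : c ≤ minPop x := by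
  obtain ⟨j, hj⟩ := exists_minPop hN x
  exact hj ▸ h j

/-- Evolution of the particle system from initial configuration `x0` with noise `w`. -/
def runBS (N : ℕ) (x0 : Fin N → ℤ) (w : ℕ → Fin N → Fin 2 → ℤ) : ℕ → Fin N → ℤ
  | 0 => x0
  | n + 1 => nextPop N (runBS N x0 w n) (w n)

lemma runBS_congr (x0 : Fin N → ℤ) {w w' : ℕ → Fin N → Fin 2 → ℤ} (n : ℕ)
    (h : ∀ k < n, w k = w' k) : runBS N x0 w n = runBS N x0 w' n := by
  induction n with
  | zero => rfl
  | succ n ih =>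
    show nextPop N _ _ = nextPop N _ _
    rw [ih (fun k hk => h k (by omega)), h n (by omega)]

lemma runBS_add (x0 : Fin N → ℤ) (w : ℕ → Fin N → Fin 2 → ℤ) (t n : ℕ) :
    runBS N x0 w (t + n) = runBS N (runBS N x0 w t) (fun k => w (t + k)) n := by
  induction n with
  | zero => rfl
  | succ n ih =>
    show runBS N x0 w (t+n+1) = _
    show nextPop N (runBS N x0 w (t+n)) (w (t+n)) = nextPop N _ _
    rw [ih]

lemma runBS_mono {x0 x0' : Fin N → ℤ} (h : ∀ j, x0 j ≤ x0' j) (w : ℕ → Fin N → Fin 2 → ℤ)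
    (n : ℕ) : ∀ j, runBS N x0 w n j ≤ runBS N x0' w n j := by
  induction n with
  | zero => exact h
  | succ n ih => exact fun j => nextPop_mono ih (w n) j

lemma runBS_addc (x0 : Fin N → ℤ) (c : ℤ) (w : ℕ → Fin N → Fin 2 → ℤ) (n : ℕ) :
    ∀ j, runBS N (fun i => x0 i + c) w n j = runBS N x0 w n j + c := by
  induction n with
  | zero => exact fun j => rfl
  | succ n ih =>
    intro j
    show nextPop N (runBS N (fun i => x0 i + c) w n) (w n) j = nextPop N (runBS N x0 w n) (w n) j + c
    have : runBS N (fun i => x0 i + c) w n = fun i => runBS N x0 w n i + c := funext ih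
    rw [this, nextPop_add]

lemma minPop_runBS_succ (hN : 0 < N) (x0 : Fin N → ℤ) {w : ℕ → Fin N → Fin 2 → ℤ}
    (hw : ∀ k j l, 0 ≤ w k j l) (n : ℕ) :
    minPop (runBS N x0 w n) ≤ minPop (runBS N x0 w (n + 1)) := by
  apply le_minPop hN
  intro j
  obtain ⟨q, hq⟩ := nextPop_mem (runBS N x0 w n) (w n) j
  show minPop _ ≤ nextPop N _ _ j
  rw [hq]
  have := minPop_le (runBS N x0 w n) q.1
  have := hw n q.1 q.2
  omega

lemma minPop_runBS_mono (hN : 0 < N) (x0 : Fin N → ℤ) {w : ℕ → Fin N → Fin 2 → ℤ}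
    (hw : ∀ k j l, 0 ≤ w k j l) {a b : ℕ} (hab : a ≤ b) :
    minPop (runBS N x0 w a) ≤ minPop (runBS N x0 w b) :=
  monotone_nat_of_le_succ (minPop_runBS_succ hN x0 hw) hab

lemma maxPop_runBS_le (hN : 0 < N) {w : ℕ → Fin N → Fin 2 → ℤ}
    (hw : ∀ k j l, w k j l ≤ 1) (n : ℕ) :
    maxPop (runBS N (fun _ => (0:ℤ)) w n) ≤ n := by
  induction n with
  | zero => simp [runBS, maxPop_const hN]
  | succ n ih =>
    obtain ⟨j, hj⟩ := exists_maxPop hN (runBS N (fun _ => (0:ℤ)) w (n+1))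
    rw [hj]
    show nextPop N _ _ j ≤ _
    obtain ⟨q, hq⟩ := nextPop_mem (runBS N (fun _ => (0:ℤ)) w n) (w n) j
    rw [hq]
    have := le_maxPop (runBS N (fun _ => (0:ℤ)) w n) q.1
    have := hw n q.1 q.2
    omega

lemma coupling (hN : 0 < N) (x0 : Fin N → ℤ) (w : ℕ → Fin N → Fin 2 → ℤ) (t n : ℕ) :
    ∀ j, minPop (runBS N x0 w t) + runBS N (fun _ => 0) (fun k => w (t + k)) n j
      ≤ runBS N x0 w (t + n) j := by
  induction n with
  | zero =>
    intro j
    have h := minPop_le (runBS N x0 w t) j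
    have h0 : runBS N (fun _ => (0:ℤ)) (fun k => w (t + k)) 0 j = 0 := rfl
    rw [Nat.add_zero]
    omega
  | succ n ih =>
    intro j
    set c := minPop (runBS N x0 w t) with hc
    have step : runBS N x0 w (t + (n+1)) = nextPop N (runBS N x0 w (t+n)) (w (t+n)) := by
      show runBS N x0 w (t+n+1) = _
      rfl
    rw [step]
    have h1 : nextPop N (fun i => runBS N (fun _ => 0) (fun k => w (t + k)) n i + c) (w (t+n)) j
        ≤ nextPop N (runBS N x0 w (t+n)) (w (t+n)) j := by
      apply nextPop_mono
      intro i
      have := ih i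
      omega
    rw [nextPop_add] at h1
    show c + nextPop N (runBS N (fun _ => 0) (fun k => w (t + k)) n) (w (t+n)) j ≤ _
    omega

lemma minPop_coupling (hN : 0 < N) (x0 : Fin N → ℤ) (w : ℕ → Fin N → Fin 2 → ℤ) (t n : ℕ) :
    minPop (runBS N x0 w t) + minPop (runBS N (fun _ => 0) (fun k => w (t + k)) n)
      ≤ minPop (runBS N x0 w (t + n)) := by
  apply le_minPop hN
  intro j
  have h1 := coupling hN x0 w t n j
  have h2 := minPop_le (runBS N (fun _ => 0) (fun k => w (t + k)) n) j
  omega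

open Classical in
/-- Classical indicator of a proposition. -/
def indR (P : Prop) : ℝ := if P then 1 else 0

lemma indR_of {P : Prop} (h : P) : indR P = 1 := by simp [indR, h]
lemma indR_of_not {P : Prop} (h : ¬ P) : indR P = 0 := by simp [indR, h]
lemma indR_nonneg (P : Prop) : 0 ≤ indR P := by
  by_cases h : P
  · rw [indR_of h]; norm_num
  · rw [indR_of_not h]
lemma indR_le_one (P : Prop) : indR P ≤ 1 := by
  by_cases h : P
  · rw [indR_of h]
  · rw [indR_of_not h]; norm_num

/-- The event that the minimum stays below the line of slope `r` for all times in `[1, m]`. -/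
def Bpred (N m : ℕ) (r : ℝ) (w : ℕ → Fin N → Fin 2 → ℤ) : Prop :=
  ∀ i : ℕ, 1 ≤ i → i ≤ m → (minPop (runBS N (fun _ => 0) w i) : ℝ) < r * i

def shiftW {N : ℕ} (w : ℕ → Fin N → Fin 2 → ℤ) (t : ℕ) : ℕ → Fin N → Fin 2 → ℤ :=
  fun k => w (t + k)

open Classical in
/-- Length of the regeneration block starting at time `t`. -/
def tauBS (N m : ℕ) (r : ℝ) (w : ℕ → Fin N → Fin 2 → ℤ) (t : ℕ) : ℕ :=
  if ∃ i : ℕ, 1 ≤ i ∧ i ≤ m ∧ r * i ≤ (minPop (runBS N (fun _ => 0) (shiftW w t) i) : ℝ)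
  then sInf {i : ℕ | 1 ≤ i ∧ i ≤ m ∧ r * i ≤ (minPop (runBS N (fun _ => 0) (shiftW w t) i) : ℝ)}
  else m

/-- Regeneration times. -/
def TBS (N m : ℕ) (r : ℝ) (w : ℕ → Fin N → Fin 2 → ℤ) : ℕ → ℕ
  | 0 => 0
  | k + 1 => TBS N m r w k + tauBS N m r w (TBS N m r w k)

section Path
variable (hN : 0 < N) {m : ℕ} (hm : 1 ≤ m) {r : ℝ} (hr : 0 ≤ r)
  {w : ℕ → Fin N → Fin 2 → ℤ} (hw0 : ∀ k j l, 0 ≤ w k j l)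

include hm in
lemma tauBS_mem_Icc (t : ℕ) : 1 ≤ tauBS N m r w t ∧ tauBS N m r w t ≤ m := by
  rw [tauBS]
  split_ifs with h
  · have := Nat.sInf_mem h
    exact ⟨this.1, this.2.1⟩
  · exact ⟨hm, le_refl m⟩

lemma tauBS_good (t : ℕ) (h : ¬ Bpred N m r (shiftW w t)) :
    r * (tauBS N m r w t : ℝ) ≤
      (minPop (runBS N (fun _ => 0) (shiftW w t) (tauBS N m r w t)) : ℝ) := by
  rw [Bpred] at h
  push_neg at h
  obtain ⟨i, h1, h2, h3⟩ := h
  have hex : ∃ i : ℕ, 1 ≤ i ∧ i ≤ m ∧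
      r * i ≤ (minPop (runBS N (fun _ => 0) (shiftW w t) i) : ℝ) := ⟨i, h1, h2, h3⟩
  rw [tauBS, if_pos hex]
  exact (Nat.sInf_mem hex).2.2

lemma tauBS_bad (t : ℕ) (h : Bpred N m r (shiftW w t)) : tauBS N m r w t = m := by
  rw [tauBS, if_neg]
  intro hex
  obtain ⟨i, h1, h2, h3⟩ := hex
  exact absurd (h i h1 h2) (not_lt.mpr h3)

include hN hm hr hw0 in
lemma key_induction (K : ℕ) :
    r * (TBS N m r w K : ℝ)
      - r * m * (∑ k ∈ Finset.range K, indR (Bpred N m r (shiftW w (TBS N m r w k))))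
    ≤ ((minPop (runBS N (fun _ => 0) w (TBS N m r w K)) : ℤ) : ℝ) := by
  induction K with
  | zero =>
    have h0 : TBS N m r w 0 = 0 := rfl
    rw [h0]
    have : minPop (runBS N (fun _ => (0:ℤ)) w 0) = 0 := by
      show minPop (fun _ : Fin N => (0:ℤ)) = 0
      exact minPop_const hN 0
    rw [this]
    simp
  | succ K ih =>
    set t := TBS N m r w K with htdef
    have hstep : TBS N m r w (K + 1) = t + tauBS N m r w t := rfl
    have hco := minPop_coupling hN (fun _ => (0:ℤ)) w t (tauBS N m r w t)
    rw [Finset.sum_range_succ, hstep]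
    by_cases hbad : Bpred N m r (shiftW w t)
    · -- bad block
      have htau := tauBS_bad (w := w) t hbad
      have hmono := minPop_runBS_mono hN (fun _ => (0:ℤ)) hw0
        (le_add_right (le_refl t) (c := tauBS N m r w t))
      rw [indR_of hbad, htau]
      push_cast
      rw [htau] at hmono
      have : (minPop (runBS N (fun _ => (0:ℤ)) w t) : ℝ)
          ≤ (minPop (runBS N (fun _ => (0:ℤ)) w (t + m)) : ℝ) := by exact_mod_cast hmono
      nlinarith [ih]
    · -- good block
      have hgood := tauBS_good (w := w) t hbad
      have : (minPop (runBS N (fun _ => (0:ℤ)) w t) : ℝ)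
            + (minPop (runBS N (fun _ => 0) (shiftW w t) (tauBS N m r w t)) : ℝ)
          ≤ (minPop (runBS N (fun _ => (0:ℤ)) w (t + tauBS N m r w t)) : ℝ) := by
        have heq : (fun k => w (t + k)) = shiftW w t := rfl
        rw [heq] at hco
        exact_mod_cast hco
      rw [indR_of_not hbad]
      push_cast
      nlinarith [ih, hgood]

include hN hm hr hw0 in
lemma pathwise_bound (n : ℕ) :
    r * n - r * m - r * m * (∑ t ∈ Finset.range n, indR (Bpred N m r (shiftW w t)))
      ≤ ((minPop (runBS N (fun _ => 0) w n) : ℤ) : ℝ) := by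
  classical
  set T := TBS N m r w with hTdef
  set P : ℕ → Prop := fun k => T k ≤ n with hP
  set K := Nat.findGreatest P n with hK
  have hT0 : T 0 = 0 := rfl
  have hTmono : StrictMono T := by
    apply strictMono_nat_of_lt_succ
    intro k
    have := (tauBS_mem_Icc hm (w := w) (r := r) (T k)).1
    show T k < T k + tauBS N m r w (T k)
    omega
  have hTk_ge : ∀ k, k ≤ T k := by
    intro k; induction k with
    | zero => omega
    | succ k ih => have h2 := hTmono (show k < k + 1 by omega); omega
  have hPK : T K ≤ n := Nat.findGreatest_spec (P := P) (Nat.zero_le n) (by simp [hP, hT0])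
  have hK1 : n < T (K + 1) := by
    rcases Nat.lt_or_ge n (K + 1) with h | h
    · have := hTk_ge (K + 1); omega
    · by_contra hc
      push_neg at hc
      exact Nat.findGreatest_is_greatest (Nat.lt_succ_self K) h hc
  have hTKub : T (K + 1) ≤ T K + m := by
    have := (tauBS_mem_Icc hm (w := w) (r := r) (T K)).2
    show T K + tauBS N m r w (T K) ≤ T K + m
    omega
  have hsum : (∑ k ∈ Finset.range K, indR (Bpred N m r (shiftW w (T k))))
      ≤ ∑ t ∈ Finset.range n, indR (Bpred N m r (shiftW w t)) := by
    have himg : ∑ k ∈ Finset.range K, indR (Bpred N m r (shiftW w (T k)))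
        = ∑ t ∈ (Finset.range K).image T, indR (Bpred N m r (shiftW w t)) :=
      (Finset.sum_image (g := T) (s := Finset.range K) (f := fun t => indR (Bpred N m r (shiftW w t)))
        (fun x _ y _ hxy => hTmono.injective hxy)).symm
    rw [himg]
    apply Finset.sum_le_sum_of_subset_of_nonneg
    · intro t ht
      rw [Finset.mem_image] at ht
      obtain ⟨k, hk, rfl⟩ := ht
      rw [Finset.mem_range] at hk ⊢
      calc T k < T K := hTmono hk
        _ ≤ n := hPK
    · intro t _ _
      exact indR_nonneg _
  have hki := key_induction hN hm hr hw0 (w := w) K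
  have hmono := minPop_runBS_mono hN (fun _ => (0:ℤ)) hw0 hPK
  have hmono' : ((minPop (runBS N (fun _ => (0:ℤ)) w (T K)) : ℤ) : ℝ)
      ≤ ((minPop (runBS N (fun _ => (0:ℤ)) w n) : ℤ) : ℝ) := by exact_mod_cast hmono
  have hTKlb : ((n : ℝ)) - m ≤ (T K : ℝ) := by
    have : n + 1 ≤ T K + m := by omega
    have := Nat.cast_le (α := ℝ) |>.mpr this
    push_cast at this
    linarith
  have h1 : r * ((n : ℝ) - m) ≤ r * (T K : ℝ) := mul_le_mul_of_nonneg_left hTKlb hr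
  have h2 : r * m * (∑ k ∈ Finset.range K, indR (Bpred N m r (shiftW w (T k))))
      ≤ r * m * (∑ t ∈ Finset.range n, indR (Bpred N m r (shiftW w t))) := by
    apply mul_le_mul_of_nonneg_left hsum
    positivity
  linarith

end Path

lemma bernoulliStep_apply (p : ℝ) (s : Set ℤ) :
    bernoulliStep p s
      = (ENNReal.ofReal p) * s.indicator 1 1 + (ENNReal.ofReal (1-p)) * s.indicator 1 0 := by
  have hms : MeasurableSet s := trivial
  rw [bernoulliStep]
  simp [Measure.dirac_apply' _ hms]

lemma bernoulliStep_isProb (p : ℝ) (hp0 : 0 < p) (hp1 : p < 1) :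
    IsProbabilityMeasure (bernoulliStep p) := by
  constructor
  rw [bernoulliStep]
  simp [Measure.dirac_apply', ENNReal.ofReal_add]
  rw [← ENNReal.ofReal_add (by linarith) (by linarith)]
  norm_num

lemma bernoulliStep_compl01 (p : ℝ) : bernoulliStep p ({0, 1} : Set ℤ)ᶜ = 0 := by
  rw [bernoulliStep]
  have hms : MeasurableSet (({0,1} : Set ℤ)ᶜ) := trivial
  have h1 : (1 : ℤ) ∉ (({0,1} : Set ℤ)ᶜ) := by simp
  have h0 : (0 : ℤ) ∉ (({0,1} : Set ℤ)ᶜ) := by simp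
  simp [Measure.dirac_apply' _ hms, Set.indicator, h1, h0]

instance bernoulliStep_finite (p : ℝ) : IsFiniteMeasure (bernoulliStep p) := by
  constructor
  rw [bernoulliStep]
  simp only [Measure.coe_add, Measure.coe_smul, Pi.add_apply, Pi.smul_apply, smul_eq_mul]
  have h1 : Measure.dirac (1:ℤ) Set.univ = 1 := by simp
  have h0 : Measure.dirac (0:ℤ) Set.univ = 1 := by simp
  rw [h1, h0, mul_one, mul_one]
  exact ENNReal.add_lt_top.mpr ⟨ENNReal.ofReal_lt_top, ENNReal.ofReal_lt_top⟩

lemma measurableSet_of_countable {F : Type*} [Countable F] [MeasurableSpace F]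
    [MeasurableSingletonClass F] (s : Set F) : MeasurableSet s := s.to_countable.measurableSet

lemma map_window_eq_pi {Ω : Type*} [MeasureSpace Ω] [IsProbabilityMeasure (ℙ : Measure Ω)]
    (p : ℝ) (Z : ℕ × ℕ × Fin 2 → Ω → ℤ) (hZm : ∀ q, Measurable (Z q))
    (hfact : ∀ (S : Finset (ℕ × ℕ × Fin 2)) (sets : (ℕ × ℕ × Fin 2) → Set ℤ),
      ℙ (⋂ q ∈ S, Z q ⁻¹' sets q) = ∏ q ∈ S, ℙ (Z q ⁻¹' sets q))
    (hsingle : ∀ q (s : Set ℤ), ℙ (Z q ⁻¹' s) = bernoulliStep p s)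
    (m N : ℕ) (hm : 1 ≤ m) (hN : 1 ≤ N) (t : ℕ) :
    Measure.map (fun ω (r : Fin m × Fin N × Fin 2) => Z (t + r.1.val, r.2.1.val, r.2.2) ω) ℙ
      = Measure.pi (fun _ : Fin m × Fin N × Fin 2 => bernoulliStep p) := by
  haveI : Nonempty (Fin m × Fin N × Fin 2) := by
    refine ⟨⟨⟨0, by omega⟩, ⟨0, by omega⟩, 0⟩⟩
  set e : Fin m × Fin N × Fin 2 → ℕ × ℕ × Fin 2 :=
    fun r => (t + r.1.val, r.2.1.val, r.2.2) with he
  have hinj : Function.Injective e := by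
    intro a b hab
    simp only [he, Prod.mk.injEq] at hab
    obtain ⟨h1, h2, h3⟩ := hab
    exact Prod.ext_iff.mpr ⟨Fin.ext (by omega), Prod.ext_iff.mpr ⟨Fin.ext h2, h3⟩⟩
  set V : Ω → (Fin m × Fin N × Fin 2 → ℤ) := fun ω r => Z (e r) ω with hV
  have hVm : Measurable V := by
    apply measurable_pi_lambda
    intro r
    exact hZm (e r)
  symm
  apply Measure.pi_eq
  intro s hs
  rw [Measure.map_apply hVm (measurableSet_of_countable _)]
  have hpre : V ⁻¹' (Set.univ.pi s) = ⋂ r ∈ (Finset.univ : Finset (Fin m × Fin N × Fin 2)),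
      Z (e r) ⁻¹' (s r) := by
    ext ω
    simp [Set.mem_univ_pi, hV]
  rw [hpre]
  set invE := Function.invFun e with hinvE
  have hleft : ∀ r, invE (e r) = r := Function.leftInverse_invFun hinj
  have hre : ⋂ r ∈ (Finset.univ : Finset (Fin m × Fin N × Fin 2)), Z (e r) ⁻¹' (s r)
      = ⋂ q ∈ (Finset.univ.image e : Finset (ℕ × ℕ × Fin 2)), Z q ⁻¹' (s (invE q)) := by
    ext ω
    simp only [Set.mem_iInter, Finset.mem_image, Finset.mem_univ, true_and]
    constructor
    · rintro h q ⟨r, rfl⟩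
      rw [hleft r]
      exact h r trivial
    · intro h r _
      have := h (e r) ⟨r, rfl⟩
      rwa [hleft r] at this
  rw [hre, hfact, Finset.prod_image (fun x _ y _ hxy => hinj hxy)]
  apply Finset.prod_congr rfl
  intro r _
  rw [hsingle, hleft r]


lemma chain_eq_runBS {Ω : Type*} (N : ℕ) (Y : ℕ → ℕ → Fin 2 → Ω → ℤ) (n : ℕ) (ω : Ω) :
    chain N Y n ω = runBS N (fun _ => 0) (fun k j l => Y k j.val l ω) n := by
  induction n with
  | zero => rfl
  | succ n ih =>
    simp only [chain, runBS]
    rw [ih]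


end BSAux

/-- **Proposition (speed lower bound via the event `B`):** let `0 < α < v(p)`, `m ≥ 1`,
and let `B` be the event that `min X^N_i < (v(p) − α)·i` for all `1 ≤ i ≤ m`.  Then
`v_N(p) ≥ (v(p) − α)·(1 − m·P(B))`. -/
theorem speed_lower_bound_via_B
    (p : ℝ) (hp0 : 0 < p) (hp1 : p < 1 / 2)
    (vp : ℝ) (hvp0 : 0 ≤ vp) (hvp1 : vp ≤ 1) (hvproot : rateFn p vp = Real.log 2)
    (α : ℝ) (hα0 : 0 < α) (hα1 : α < vp)
    (m : ℕ) (hm : 1 ≤ m)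
    (Ω : Type*) [MeasureSpace Ω] [IsProbabilityMeasure (ℙ : Measure Ω)]
    (Y : ℕ → ℕ → Fin 2 → Ω → ℤ)
    (hiid : iIndepFun
      (fun q : ℕ × ℕ × Fin 2 => Y q.1 q.2.1 q.2.2) ℙ)
    (hlaw : ∀ q : ℕ × ℕ × Fin 2, Measure.map (Y q.1 q.2.1 q.2.2) ℙ = bernoulliStep p)
    (N : ℕ) (hN : 1 ≤ N)
    (vN : ℝ)
    (hvN : ∀ᵐ ω ∂ℙ,
      Tendsto (fun n => (maxPop (chain N Y n ω) : ℝ) / n) atTop (nhds vN))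
    (B : Set Ω)
    (hB : B = {ω | ∀ i : ℕ, 1 ≤ i → i ≤ m →
      (minPop (chain N Y i ω) : ℝ) < (vp - α) * i}) :
    (vp - α) * (1 - m * (ℙ B).toReal) ≤ vN := by
  classical
  have hN0 : 0 < N := hN
  set r : ℝ := vp - α with hrdef
  have hr : 0 ≤ r := by rw [hrdef]; linarith
  -- measurable modifications of the noise
  have haem : ∀ q : ℕ × ℕ × Fin 2, AEMeasurable (Y q.1 q.2.1 q.2.2) ℙ := by
    intro q
    by_contra hc
    have h0 := Measure.map_of_not_aemeasurable hc
    rw [hlaw q] at h0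
    haveI := BSAux.bernoulliStep_isProb p hp0 (by linarith)
    have h1 : (bernoulliStep p) Set.univ = 1 := measure_univ
    rw [h0] at h1
    simp at h1
  set Z : ℕ × ℕ × Fin 2 → Ω → ℤ := fun q => (haem q).mk _ with hZdef
  have hZm : ∀ q, Measurable (Z q) := fun q => (haem q).measurable_mk
  have hZae : ∀ q : ℕ × ℕ × Fin 2, Y q.1 q.2.1 q.2.2 =ᵐ[ℙ] Z q := fun q => (haem q).ae_eq_mk
  have hZlaw : ∀ q, Measure.map (Z q) ℙ = bernoulliStep p := by
    intro q
    rw [← Measure.map_congr (hZae q), hlaw q]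
  have hsingle : ∀ q (s : Set ℤ), ℙ (Z q ⁻¹' s) = bernoulliStep p s := by
    intro q s
    rw [← hZlaw q, Measure.map_apply (hZm q) trivial]
  -- the almost sure good set
  set G : Set Ω := {ω | ∀ q : ℕ × ℕ × Fin 2,
      Y q.1 q.2.1 q.2.2 ω = Z q ω ∧ Z q ω ∈ ({0, 1} : Set ℤ)} with hGdef
  have hG : ∀ᵐ ω ∂ℙ, ω ∈ G := by
    have : ∀ᵐ ω ∂ℙ, ∀ q : ℕ × ℕ × Fin 2,
        Y q.1 q.2.1 q.2.2 ω = Z q ω ∧ Z q ω ∈ ({0, 1} : Set ℤ) := by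
      rw [ae_all_iff]
      intro q
      have h2 : ∀ᵐ ω ∂ℙ, Z q ω ∈ ({0, 1} : Set ℤ) := by
        have hz : ℙ (Z q ⁻¹' (({0, 1} : Set ℤ)ᶜ)) = 0 := by
          rw [hsingle]
          exact BSAux.bernoulliStep_compl01 p
        have hseteq : {ω | ¬ Z q ω ∈ ({0,1} : Set ℤ)} = Z q ⁻¹' (({0,1} : Set ℤ)ᶜ) := by
          ext ω; simp
        rw [ae_iff, hseteq]
        exact hz
      filter_upwards [hZae q, h2] with ω h1 h2
      exact ⟨h1, h2⟩
    exact this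
  have hYZall : ∀ᵐ ω ∂ℙ, ∀ q : ℕ × ℕ × Fin 2, Y q.1 q.2.1 q.2.2 ω = Z q ω := by
    filter_upwards [hG] with ω hω q
    exact (hω q).1
  -- factorization of finite intersections
  have hfact : ∀ (S : Finset (ℕ × ℕ × Fin 2)) (sets : (ℕ × ℕ × Fin 2) → Set ℤ),
      ℙ (⋂ q ∈ S, Z q ⁻¹' sets q) = ∏ q ∈ S, ℙ (Z q ⁻¹' sets q) := by
    intro S sets
    have hY := hiid.measure_inter_preimage_eq_mul S (sets := sets) (fun i _ => trivial)
    have hsetseq : (⋂ q ∈ S, Z q ⁻¹' sets q)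
        =ᵐ[ℙ] (⋂ q ∈ S, (fun ω => Y q.1 q.2.1 q.2.2 ω) ⁻¹' sets q) := by
      filter_upwards [hYZall] with ω hω
      show (ω ∈ ⋂ q ∈ S, Z q ⁻¹' sets q) = (ω ∈ ⋂ q ∈ S, (fun ω => Y q.1 q.2.1 q.2.2 ω) ⁻¹' sets q)
      simp only [Set.mem_iInter, Set.mem_preimage, eq_iff_iff]
      constructor
      · intro h q hq
        rw [hω q]
        exact h q hq
      · intro h q hq
        rw [← hω q]
        exact h q hq
    rw [measure_congr hsetseq, hY]
    apply Finset.prod_congr rfl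
    intro q hq
    rw [hsingle q (sets q), ← hlaw q, Measure.map_apply_of_aemeasurable (haem q) trivial]
  -- the law of every window of the noise is the same product measure
  have hwin : ∀ t : ℕ,
      Measure.map (fun ω (rr : Fin m × Fin N × Fin 2) => Z (t + rr.1.val, rr.2.1.val, rr.2.2) ω) ℙ
        = Measure.pi (fun _ : Fin m × Fin N × Fin 2 => bernoulliStep p) :=
    fun t => BSAux.map_window_eq_pi p Z hZm hfact hsingle m N hm hN t
  -- the driving noise
  set W : Ω → ℕ → Fin N → Fin 2 → ℤ := fun ω k j l => Z (k, j.val, l) ω with hWdef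
  set SBad : Set (Fin m × Fin N × Fin 2 → ℤ) :=
    {v | BSAux.Bpred N m r (fun k j l => if h : k < m then v (⟨k, h⟩, j, l) else 0)} with hSdef
  have hBwin : ∀ w : ℕ → Fin N → Fin 2 → ℤ,
      BSAux.Bpred N m r w ↔ (fun rr : Fin m × Fin N × Fin 2 => w rr.1.val rr.2.1 rr.2.2) ∈ SBad := by
    intro w
    have hrun : ∀ i, i ≤ m →
        BSAux.runBS N (fun _ => 0) (fun k j l => if hk : k < m then
          (fun rr : Fin m × Fin N × Fin 2 => w rr.1.val rr.2.1 rr.2.2) (⟨k, hk⟩, j, l) else 0) i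
        = BSAux.runBS N (fun _ => 0) w i := by
      intro i hi
      apply BSAux.runBS_congr
      intro k hk
      funext j l
      rw [dif_pos (lt_of_lt_of_le hk hi)]
    rw [hSdef]
    simp only [Set.mem_setOf_eq]
    constructor
    · intro h i h1 h2
      rw [BSAux.Bpred] at h
      rw [hrun i h2]
      exact h i h1 h2
    · intro h
      intro i h1 h2
      have := h i h1 h2
      rwa [hrun i h2] at this
  have hVt : ∀ t : ℕ, {ω | BSAux.Bpred N m r (BSAux.shiftW (W ω) t)}
      = (fun ω (rr : Fin m × Fin N × Fin 2) => Z (t + rr.1.val, rr.2.1.val, rr.2.2) ω) ⁻¹' SBad := by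
    intro t
    ext ω
    rw [Set.mem_setOf_eq, hBwin (BSAux.shiftW (W ω) t), Set.mem_preimage]
    rfl
  have hVtm : ∀ t : ℕ, Measurable
      (fun ω (rr : Fin m × Fin N × Fin 2) => Z (t + rr.1.val, rr.2.1.val, rr.2.2) ω) := by
    intro t
    apply measurable_pi_lambda
    intro rr
    exact hZm _
  have hmeasBt : ∀ t : ℕ, MeasurableSet {ω | BSAux.Bpred N m r (BSAux.shiftW (W ω) t)} := by
    intro t
    rw [hVt t]
    exact (hVtm t) (BSAux.measurableSet_of_countable SBad)
  have hPBt : ∀ t : ℕ, ℙ {ω | BSAux.Bpred N m r (BSAux.shiftW (W ω) t)}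
      = ℙ {ω | BSAux.Bpred N m r (BSAux.shiftW (W ω) 0)} := by
    intro t
    rw [hVt t, hVt 0,
      ← Measure.map_apply (hVtm t) (BSAux.measurableSet_of_countable SBad),
      ← Measure.map_apply (hVtm 0) (BSAux.measurableSet_of_countable SBad),
      hwin t, hwin 0]
  -- identification of the event B
  have hchainW : ∀ ω ∈ G, ∀ n : ℕ, chain N Y n ω = BSAux.runBS N (fun _ => 0) (W ω) n := by
    intro ω hω n
    rw [BSAux.chain_eq_runBS]
    apply BSAux.runBS_congr
    intro k _
    funext j l
    exact (hω (k, j.val, l)).1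
  have hPB0 : ℙ {ω | BSAux.Bpred N m r (BSAux.shiftW (W ω) 0)} = ℙ B := by
    apply measure_congr
    filter_upwards [hG] with ω hω
    show (ω ∈ {ω | BSAux.Bpred N m r (BSAux.shiftW (W ω) 0)}) = (ω ∈ B)
    rw [eq_iff_iff, hB]
    simp only [Set.mem_setOf_eq]
    have hsh : ∀ i : ℕ, BSAux.runBS N (fun _ => 0) (BSAux.shiftW (W ω) 0) i
        = BSAux.runBS N (fun _ => 0) (W ω) i := by
      intro i
      apply BSAux.runBS_congr
      intro k _
      show W ω (0 + k) = W ω k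
      rw [Nat.zero_add]
    constructor
    · intro h i h1 h2
      have := h i h1 h2
      rw [hsh i] at this
      rw [hchainW ω hω i]
      exact this
    · intro h i h1 h2
      rw [hsh i]
      rw [← hchainW ω hω i]
      exact h i h1 h2
  set PB : ℝ := (ℙ B).toReal with hPBdef
  -- pointwise facts on G
  have hw01 : ∀ ω ∈ G, (∀ k j l, 0 ≤ W ω k j l) ∧ (∀ k j l, W ω k j l ≤ 1) := by
    intro ω hω
    constructor <;> intro k j l <;>
    · have := (hω (k, j.val, l)).2
      simp only [Set.mem_insert_iff, Set.mem_singleton_iff] at this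
      rcases this with h | h <;> rw [hWdef] <;> simp only [h] <;> norm_num
  -- the integrand
  set g : ℕ → Ω → ℝ := fun n ω => ((maxPop (BSAux.runBS N (fun _ => 0) (W ω) n) : ℤ) : ℝ) with hgdef
  have hg_meas : ∀ n, Measurable (g n) := by
    intro n
    have : g n = (fun v : Fin n × Fin N × Fin 2 → ℤ =>
        ((maxPop (BSAux.runBS N (fun _ => 0)
          (fun k j l => if h : k < n then v (⟨k, h⟩, j, l) else 0) n) : ℤ) : ℝ))
        ∘ (fun ω (rr : Fin n × Fin N × Fin 2) => Z (rr.1.val, rr.2.1.val, rr.2.2) ω) := by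
      funext ω
      show g n ω = _
      rw [hgdef]
      simp only [Function.comp_apply]
      congr 2
      apply BSAux.runBS_congr
      intro k hk
      funext j l
      rw [dif_pos hk]
    rw [this]
    apply Measurable.comp
    · exact measurable_of_countable _
    · apply measurable_pi_lambda
      intro rr
      exact hZm _
  have hgbd : ∀ ω ∈ G, ∀ n : ℕ, 0 ≤ g n ω ∧ g n ω ≤ n := by
    intro ω hω n
    obtain ⟨hw0, hw1⟩ := hw01 ω hω
    constructor
    · have h1 : minPop (BSAux.runBS N (fun _ => (0:ℤ)) (W ω) 0) ≤ minPop (BSAux.runBS N (fun _ => 0) (W ω) n) :=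
        BSAux.minPop_runBS_mono hN0 _ hw0 (Nat.zero_le n)
      have h2 : minPop (BSAux.runBS N (fun _ => (0:ℤ)) (W ω) 0) = 0 := BSAux.minPop_const hN0 0
      have h3 := BSAux.minPop_le_maxPop hN0 (BSAux.runBS N (fun _ => 0) (W ω) n)
      rw [hgdef]
      push_cast
      rw [h2] at h1
      have : (0:ℤ) ≤ maxPop (BSAux.runBS N (fun _ => 0) (W ω) n) := le_trans h1 h3
      exact_mod_cast this
    · have := BSAux.maxPop_runBS_le hN0 hw1 n
      show ((maxPop (BSAux.runBS N (fun _ => 0) (W ω) n) : ℤ) : ℝ) ≤ (n : ℝ)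
      exact_mod_cast this
  have hlb : ∀ ω ∈ G, ∀ n : ℕ,
      r * n - r * m - r * m *
        (∑ t ∈ Finset.range n, BSAux.indR (BSAux.Bpred N m r (BSAux.shiftW (W ω) t)))
      ≤ g n ω := by
    intro ω hω n
    obtain ⟨hw0, hw1⟩ := hw01 ω hω
    have h1 := BSAux.pathwise_bound hN0 hm hr hw0 n
    have h2 := BSAux.minPop_le_maxPop hN0 (BSAux.runBS N (fun _ => 0) (W ω) n)
    have h2' : ((minPop (BSAux.runBS N (fun _ => 0) (W ω) n) : ℤ) : ℝ) ≤ g n ω := by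
      show _ ≤ ((maxPop (BSAux.runBS N (fun _ => 0) (W ω) n) : ℤ) : ℝ)
      exact_mod_cast h2
    linarith
  -- integrability and integral bounds
  have hg_int : ∀ n : ℕ, Integrable (g n) ℙ := by
    intro n
    apply Integrable.mono' (integrable_const (n : ℝ)) (hg_meas n).aestronglyMeasurable
    filter_upwards [hG] with ω hω
    obtain ⟨h0, h1⟩ := hgbd ω hω n
    rw [Real.norm_eq_abs, abs_of_nonneg h0]
    exact h1
  have hind_eq : ∀ t : ℕ, (fun ω => BSAux.indR (BSAux.Bpred N m r (BSAux.shiftW (W ω) t)))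
      = Set.indicator {ω | BSAux.Bpred N m r (BSAux.shiftW (W ω) t)} (fun _ => (1:ℝ)) := by
    intro t
    funext ω
    by_cases h : BSAux.Bpred N m r (BSAux.shiftW (W ω) t)
    · rw [BSAux.indR_of h, Set.indicator_of_mem
        (show ω ∈ {ω | BSAux.Bpred N m r (BSAux.shiftW (W ω) t)} from h)]
    · rw [BSAux.indR_of_not h, Set.indicator_of_notMem
        (show ω ∉ {ω | BSAux.Bpred N m r (BSAux.shiftW (W ω) t)} from h)]
  have hind_int : ∀ t : ℕ,
      Integrable (fun ω => BSAux.indR (BSAux.Bpred N m r (BSAux.shiftW (W ω) t))) ℙ := by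
    intro t
    rw [hind_eq t]
    exact (integrable_const (1:ℝ)).indicator (hmeasBt t)
  have hind_val : ∀ t : ℕ,
      ∫ ω, BSAux.indR (BSAux.Bpred N m r (BSAux.shiftW (W ω) t)) ∂ℙ = PB := by
    intro t
    rw [hind_eq t, integral_indicator_const (1:ℝ) (hmeasBt t), measureReal_def, hPBt t, hPB0, hPBdef]
    simp
  have hIlb : ∀ n : ℕ, r * n - r * m - r * m * (n * PB) ≤ ∫ ω, g n ω ∂ℙ := by
    intro n
    have hSint : Integrable (fun ω => ∑ t ∈ Finset.range n,
        BSAux.indR (BSAux.Bpred N m r (BSAux.shiftW (W ω) t))) ℙ := by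
      apply integrable_finset_sum
      intro t _
      exact hind_int t
    have hlhs_int : Integrable (fun ω => r * n - r * m - r * m *
        (∑ t ∈ Finset.range n, BSAux.indR (BSAux.Bpred N m r (BSAux.shiftW (W ω) t)))) ℙ :=
      (integrable_const (r * n - r * m)).sub (hSint.const_mul (r * m))
    have hmono := integral_mono_ae hlhs_int (hg_int n) (by
      filter_upwards [hG] with ω hω
      exact hlb ω hω n)
    have hcalc : ∫ ω, (r * n - r * m - r * m *
        (∑ t ∈ Finset.range n, BSAux.indR (BSAux.Bpred N m r (BSAux.shiftW (W ω) t)))) ∂ℙ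
        = r * n - r * m - r * m * (n * PB) := by
      rw [integral_sub (integrable_const _) (hSint.const_mul _), integral_const,
        integral_const_mul, integral_finset_sum _ (fun t _ => hind_int t)]
      have : ∑ t ∈ Finset.range n,
          ∫ ω, BSAux.indR (BSAux.Bpred N m r (BSAux.shiftW (W ω) t)) ∂ℙ = n * PB := by
        rw [Finset.sum_congr rfl (fun t _ => hind_val t)]
        simp [mul_comm]
      rw [this]
      simp [measure_univ]
    rw [hcalc] at hmono
    exact hmono
  -- convergence of the normalized integrals
  have htendInt : Tendsto (fun n : ℕ => (∫ ω, g n ω ∂ℙ) / n) atTop (nhds vN) := by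
    have hdc := MeasureTheory.tendsto_integral_of_dominated_convergence
      (F := fun (n : ℕ) ω => g n ω / n) (f := fun _ => vN) (bound := fun _ => (1:ℝ))
      (fun n => ((hg_meas n).div_const _).aestronglyMeasurable)
      (integrable_const 1)
      (by
        intro n
        filter_upwards [hG] with ω hω
        rcases Nat.eq_zero_or_pos n with rfl | hn
        · simp
        · obtain ⟨h0, h1⟩ := hgbd ω hω n
          have hnp : (0:ℝ) < n := by exact_mod_cast hn
          rw [Real.norm_eq_abs, abs_of_nonneg (div_nonneg h0 (le_of_lt hnp)), div_le_one hnp]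
          exact h1)
      (by
        filter_upwards [hvN, hG] with ω hten hω
        have : (fun n : ℕ => (maxPop (chain N Y n ω) : ℝ) / n) = fun n : ℕ => g n ω / n := by
          funext n
          rw [hgdef]
          congr 2
          rw [hchainW ω hω n]
        rwa [this] at hten)
    have : ∫ (_ω : Ω), vN ∂ℙ = vN := by simp [measure_univ]
    rw [this] at hdc
    have heq : (fun n : ℕ => ∫ ω, g n ω / n ∂ℙ) = fun n : ℕ => (∫ ω, g n ω ∂ℙ) / n := by
      funext n
      rw [integral_div]
    rwa [heq] at hdc
  -- conclusion
  have hc : Tendsto (fun n : ℕ => r - r * m / n - r * m * PB) atTop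
      (nhds (r - 0 - r * m * PB)) := by
    apply Tendsto.sub_const
    exact tendsto_const_nhds.sub (tendsto_const_div_atTop_nhds_zero_nat (r * m))
  have hev : ∀ᶠ n : ℕ in atTop, r - r * m / n - r * m * PB ≤ (∫ ω, g n ω ∂ℙ) / n := by
    rw [eventually_atTop]
    refine ⟨1, fun n hn => ?_⟩
    have hnp : (0:ℝ) < n := by exact_mod_cast hn
    have h1 := hIlb n
    have h2 : (r * n - r * m - r * m * (n * PB)) / n = r - r * m / n - r * m * PB := by
      field_simp
    rw [← h2]
    gcongr
  have hfinal := le_of_tendsto_of_tendsto hc htendInt hev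
  have : r - 0 - r * m * PB = (vp - α) * (1 - m * PB) := by
    rw [hrdef]; ring
  rw [this] at hfinal
  exact hfinal


end
end
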